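/- arXiv:1811.09606 — 8 statements merged into one kernel-verified Lean document; each statement's English description precedes it below -/
import Mathlib

section
/- For every m ≥ 1, any set of cells in a 2m×2m board with no two cells diagonally adjacent has cardinality at most 2m². -/
/-- Two cells are diagonally adjacent (a pawn attack) if their rows and
columns each differ by exactly 1. -/
def PawnAdj {a b : ℕ} (p q : Fin a × Fin b) : Prop :=
  |((p.1 : ℕ) : ℤ) - ((q.1 : ℕ) : ℤ)| = 1 ∧ |((p.2 : ℕ) : ℤ) - ((q.2 : ℕ) : ℤ)| = 1

instance {a b : ℕ} (p q : Fin a × Fin b) : Decidable (PawnAdj p q) := by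
  unfold PawnAdj; infer_instance

/-- A set of pawns is nonattacking if no two distinct cells are diagonally adjacent. -/
def Nonatt {a b : ℕ} (S : Finset (Fin a × Fin b)) : Prop :=
  ∀ p ∈ S, ∀ q ∈ S, p ≠ q → ¬ PawnAdj p q

instance {a b : ℕ} (S : Finset (Fin a × Fin b)) : Decidable (Nonatt S) := by
  unfold Nonatt; infer_instance

theorem stmt1 (m : ℕ) (hm : 1 ≤ m)
    (S : Finset (Fin (2 * m) × Fin (2 * m))) (hS : Nonatt S) :
    S.card ≤ 2 * m ^ 2 := by
  classical
  set f : Fin (2 * m) × Fin (2 * m) → ℕ × ℕ × ℕ :=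
    fun p => ((p.1 : ℕ) / 2, (p.2 : ℕ) / 2, ((p.1 : ℕ) + (p.2 : ℕ)) % 2) with hf
  have hinj : Set.InjOn f S := by
    rintro ⟨r, c⟩ hp ⟨r', c'⟩ hq h
    simp only [hf, Prod.mk.injEq] at h
    obtain ⟨h1, h2, h3⟩ := h
    by_contra hne
    have hne' : (r : ℕ) ≠ (r' : ℕ) ∨ (c : ℕ) ≠ (c' : ℕ) := by
      by_contra hcon
      push_neg at hcon
      exact hne (by ext <;> simp [hcon.1, hcon.2])
    refine hS _ hp _ hq hne ⟨?_, ?_⟩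
    · show |((r : ℕ) : ℤ) - ((r' : ℕ) : ℤ)| = 1
      rw [abs_eq (by norm_num : (0:ℤ) ≤ 1)]
      rcases hne' with h | h <;> omega
    · show |((c : ℕ) : ℤ) - ((c' : ℕ) : ℤ)| = 1
      rw [abs_eq (by norm_num : (0:ℤ) ≤ 1)]
      rcases hne' with h | h <;> omega
  have hcard : S.card = (S.image f).card :=
    (Finset.card_image_of_injOn hinj).symm
  have hsub : S.image f ⊆
      Finset.range m ×ˢ (Finset.range m ×ˢ Finset.range 2) := by
    intro x hx
    simp only [Finset.mem_image] at hx
    obtain ⟨⟨r, c⟩, _, rfl⟩ := hx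
    have hr := r.2
    have hc := c.2
    simp only [hf, Finset.mem_product, Finset.mem_range]
    refine ⟨by omega, by omega, by omega⟩
  calc S.card = (S.image f).card := hcard
    _ ≤ (Finset.range m ×ˢ (Finset.range m ×ˢ Finset.range 2)).card :=
        Finset.card_le_card hsub
    _ = 2 * m ^ 2 := by simp [Finset.card_product]; ring
end

section
/- For every m, n ≥ 1, any set of cells in a 2n×2m board with no two cells diagonally adjacent has cardinality at most 2mn, and this bound is achieved (e.g., by the set of all cells in even-indexed columns). -/
theorem stmt2 (m n : ℕ) (hm : 1 ≤ m) (hn : 1 ≤ n) :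
    (∀ S : Finset (Fin (2 * n) × Fin (2 * m)), Nonatt S → S.card ≤ 2 * m * n) ∧
    (Nonatt ((Finset.univ : Finset (Fin (2 * n) × Fin (2 * m))).filter
        (fun p => (p.2 : ℕ) % 2 = 0)) ∧
      ((Finset.univ : Finset (Fin (2 * n) × Fin (2 * m))).filter
        (fun p => (p.2 : ℕ) % 2 = 0)).card = 2 * m * n) := by
  refine ⟨?_, ?_, ?_⟩
  · intro S hS
    have key : S.card ≤ ((Finset.range n) ×ˢ (Finset.range m) ×ˢ (Finset.range 2)).card := by
      apply Finset.card_le_card_of_injOn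
        (fun p => ((p.1 : ℕ)/2, (p.2 : ℕ)/2, ((p.1 : ℕ) + (p.2 : ℕ)) % 2))
      · intro p _
        simp only [Finset.mem_coe, Finset.mem_product, Finset.mem_range]
        have h1 := p.1.isLt
        have h2 := p.2.isLt
        refine ⟨by omega, by omega, by omega⟩
      · intro p hp q hq heq
        simp only [Prod.mk.injEq] at heq
        by_contra hne
        have hadj := hS p hp q hq hne
        apply hadj
        have hne' : (p.1 : ℕ) ≠ (q.1 : ℕ) ∨ (p.2 : ℕ) ≠ (q.2 : ℕ) := by
          by_contra hc
          push_neg at hc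
          exact hne (Prod.ext (Fin.ext hc.1) (Fin.ext hc.2))
        unfold PawnAdj
        constructor <;> (rw [Int.abs_eq_natAbs]; omega)
    calc S.card ≤ _ := key
    _ = 2 * m * n := by simp [Finset.card_product]; ring
  · intro p hp q hq hne hadj
    simp only [Finset.mem_filter] at hp hq
    have h2 := hadj.2
    rw [Int.abs_eq_natAbs] at h2
    omega
  · have heq : ((Finset.univ : Finset (Fin (2 * n) × Fin (2 * m))).filter
        (fun p => (p.2 : ℕ) % 2 = 0)) =
        (Finset.univ : Finset (Fin (2 * n))) ×ˢ
          ((Finset.univ : Finset (Fin (2 * m))).filter (fun c : Fin (2 * m) => (c : ℕ) % 2 = 0)) := by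
      ext p
      simp [Finset.mem_product]
    rw [heq, Finset.card_product, Finset.card_univ, Fintype.card_fin]
    have hcol : ((Finset.univ : Finset (Fin (2 * m))).filter
        (fun c : Fin (2 * m) => (c : ℕ) % 2 = 0)).card = m := by
      calc ((Finset.univ : Finset (Fin (2 * m))).filter
            (fun c : Fin (2 * m) => (c : ℕ) % 2 = 0)).card
          = (Finset.range m).card := by
            refine Finset.card_bij' (fun c _ => (c : ℕ) / 2)
              (fun k hk =>
                (⟨2 * k, by simp only [Finset.mem_range] at hk; omega⟩ : Fin (2 * m)))
              ?_ ?_ ?_ ?_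
            · intro c hc
              simp only [Finset.mem_filter] at hc
              have := c.isLt
              simp only [Finset.mem_range]
              omega
            · intro k hk
              simp [Finset.mem_filter]
            · intro c hc
              simp only [Finset.mem_filter] at hc
              apply Fin.ext
              simp only
              omega
            · intro k hk
              simp
        _ = m := Finset.card_range m
    rw [hcol]; ring
end

section
/- For every m ≥ 1, the number of sets of 2m cells in a 2×2m board with no two cells diagonally adjacent is exactly (m+1)². -/
open Finset


/-- membership predicate for the canonical configurations -/
def memQ (m u v rw r c : ℕ) : Prop :=
  (c < 2*u ∧ c % 2 = 0) ∨ (2*u ≤ c ∧ c < 2*v ∧ r = rw) ∨ (2*v ≤ c ∧ c < 2*m ∧ c % 2 = 1)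

instance (m u v rw r c : ℕ) : Decidable (memQ m u v rw r c) := by
  unfold memQ; infer_instance

def DD (m a b : ℕ) : Finset (Fin 2 × Fin (2*m)) :=
  Finset.univ.filter
    (fun p => memQ m (min a b) (max a b) (if a ≤ b then 0 else 1) p.1.val p.2.val)

lemma cnt1 (n u : ℕ) (hu : 2*u ≤ n) :
    ((range n).filter (fun c => c < 2*u ∧ c % 2 = 0)).card = u := by
  have h : ((range n).filter (fun c => c < 2*u ∧ c % 2 = 0)) = (range u).image (fun t => 2*t) := by
    ext c
    simp only [mem_filter, mem_range, mem_image]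
    constructor
    · intro h; exact ⟨c/2, by omega, by omega⟩
    · rintro ⟨t, ht, rfl⟩; omega
  rw [h, Finset.card_image_of_injective _ (fun x y => by omega), Finset.card_range]

lemma cnt2 (n u v r rw : ℕ) (hv : 2*v ≤ n) :
    ((range n).filter (fun c => 2*u ≤ c ∧ c < 2*v ∧ r = rw)).card
      = if r = rw then 2*v - 2*u else 0 := by
  by_cases h : r = rw
  · rw [if_pos h]
    have : ((range n).filter (fun c => 2*u ≤ c ∧ c < 2*v ∧ r = rw)) = Finset.Ico (2*u) (2*v) := by
      ext c; simp only [mem_filter, mem_range, Finset.mem_Ico]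
      constructor
      · intro hh; omega
      · intro hh; exact ⟨by omega, by omega, by omega, h⟩
    rw [this, Nat.card_Ico]
  · rw [if_neg h]
    rw [Finset.filter_false_of_mem, Finset.card_empty]
    intro c _ hc
    exact h hc.2.2

lemma cnt3 (m v : ℕ) (hv : v ≤ m) :
    ((range (2*m)).filter (fun c => 2*v ≤ c ∧ c < 2*m ∧ c % 2 = 1)).card = m - v := by
  have h : ((range (2*m)).filter (fun c => 2*v ≤ c ∧ c < 2*m ∧ c % 2 = 1))
      = (Finset.Ico v m).image (fun t => 2*t+1) := by
    ext c
    simp only [mem_filter, mem_range, mem_image, Finset.mem_Ico]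
    constructor
    · intro h; exact ⟨c/2, by omega, by omega⟩
    · rintro ⟨t, ht, rfl⟩; omega
  rw [h, Finset.card_image_of_injective _ (fun x y => by omega), Nat.card_Ico]

lemma cardQrow (m u v rw r : ℕ) (huv : u ≤ v) (hvm : v ≤ m) :
    ((range (2*m)).filter (fun c => memQ m u v rw r c)).card
      = u + (if r = rw then 2*v - 2*u else 0) + (m - v) := by
  unfold memQ
  rw [Finset.filter_or, Finset.filter_or]
  rw [Finset.card_union_of_disjoint, Finset.card_union_of_disjoint]
  · rw [cnt1 _ _ (by omega), cnt2 _ _ _ _ _ (by omega), cnt3 _ _ hvm]; ring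
  · simp only [Finset.disjoint_left, mem_filter, mem_range]
    rintro c ⟨_, h1⟩ ⟨_, h2⟩; omega
  · simp only [Finset.disjoint_left, Finset.mem_union, mem_filter, mem_range]
    rintro c ⟨_, h1⟩ h2
    rcases h2 with ⟨_, h2⟩ | ⟨_, h2⟩ <;> omega

lemma card_DD (m a b : ℕ) (ha : a ≤ m) (hb : b ≤ m) : (DD m a b).card = 2*m := by
  set u := min a b with hu
  set v := max a b with hv
  set rw : ℕ := if a ≤ b then 0 else 1 with hrw
  have huv : u ≤ v := by omega
  have hvm : v ≤ m := by omega
  rw [DD, Finset.card_filter]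
  rw [Fintype.sum_prod_type]
  rw [Fin.sum_univ_two]
  have key : ∀ r : ℕ, (∑ c : Fin (2*m), if memQ m u v rw r c.val then 1 else 0)
      = u + (if r = rw then 2*v - 2*u else 0) + (m - v) := by
    intro r
    rw [Fin.sum_univ_eq_sum_range (fun c => if memQ m u v rw r c then 1 else 0) (2*m)]
    rw [← Finset.card_filter]
    exact cardQrow m u v rw r huv hvm
  simp only [← hu, ← hv, ← hrw]
  rw [show ((0:Fin 2):ℕ) = 0 from rfl, show ((1:Fin 2):ℕ) = 1 from rfl, key 0, key 1]
  have : rw = 0 ∨ rw = 1 := by rw [hrw]; split <;> simp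
  rcases this with h | h <;> rw [h] <;> simp <;> omega

lemma nonatt_DD (m a b : ℕ) : Nonatt (DD m a b) := by
  intro p hp q hq _ hadj
  obtain ⟨h1, h2⟩ := hadj
  have hp' := (Finset.mem_filter.mp hp).2
  have hq' := (Finset.mem_filter.mp hq).2
  have hr1 : (p.1 : ℕ) < 2 := p.1.isLt
  have hr2 : (q.1 : ℕ) < 2 := q.1.isLt
  rw [abs_eq (by norm_num : (0:ℤ) ≤ 1)] at h1 h2
  unfold memQ at hp' hq'
  omega

lemma memQ_inj (m u v rw u' v' rw' : ℕ) (h : u ≤ v) (hv : v ≤ m) (h' : u' ≤ v')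
    (hv' : v' ≤ m) (hrw : rw < 2) (hrw' : rw' < 2)
    (E : ∀ r < 2, ∀ c < 2*m, (memQ m u v rw r c ↔ memQ m u' v' rw' r c)) :
    u = u' ∧ v = v' ∧ (u < v → rw = rw') := by
  have huu : u = u' := by
    rcases Nat.lt_trichotomy u u' with hlt | heq | hgt
    · exfalso
      have hc : 2*u < 2*m := by omega
      have := (E (1 - rw) (by omega) (2*u) hc).mpr
      unfold memQ at this
      have := this (by omega)
      omega
    · exact heq
    · exfalso
      have hc : 2*u' < 2*m := by omega
      have := (E (1 - rw') (by omega) (2*u') hc).mp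
      unfold memQ at this
      have := this (by omega)
      omega
  have hvv : v = v' := by
    rcases Nat.lt_trichotomy v v' with hlt | heq | hgt
    · exfalso
      have hc : 2*v < 2*m := by omega
      have := (E rw' (by omega) (2*v) hc).mpr
      unfold memQ at this
      have := this (by omega)
      omega
    · exact heq
    · exfalso
      have hc : 2*v' < 2*m := by omega
      have := (E rw (by omega) (2*v') hc).mp
      unfold memQ at this
      have := this (by omega)
      omega
  refine ⟨huu, hvv, fun huv => ?_⟩
  have hc : 2*u < 2*m := by omega
  have := (E rw (by omega) (2*u) hc).mp
  unfold memQ at this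
  have := this (by omega)
  omega
section Complete
variable (m : ℕ) (S : Finset (Fin 2 × Fin (2*m)))

/-- number of pawns in column c -/
def wS (c : ℕ) : ℕ :=
  if h : c < 2*m then
    ((if ((0:Fin 2), (⟨c,h⟩ : Fin (2*m))) ∈ S then 1 else 0) +
     (if ((1:Fin 2), (⟨c,h⟩ : Fin (2*m))) ∈ S then 1 else 0))
  else 0

/-- prefix sums of column counts -/
def PS (k : ℕ) : ℕ := ∑ c ∈ Finset.range k, wS m S c

lemma wS_le2 (c : ℕ) : wS m S c ≤ 2 := by
  unfold wS; split
  · split_ifs <;> omega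
  · omega

lemma wS_high (c : ℕ) (h : 2*m ≤ c) : wS m S c = 0 := by
  unfold wS; rw [dif_neg (by omega)]

lemma PS_succ (k : ℕ) : PS m S (k+1) = PS m S k + wS m S k :=
  Finset.sum_range_succ _ _

lemma PS_zero : PS m S 0 = 0 := rfl

lemma w2mem (c : ℕ) (h : c < 2*m) (hw : wS m S c = 2) :
    ((0:Fin 2), (⟨c,h⟩ : Fin (2*m))) ∈ S ∧ ((1:Fin 2), (⟨c,h⟩ : Fin (2*m))) ∈ S := by
  rw [wS, dif_pos h] at hw
  split_ifs at hw <;> first | omega | exact ⟨by assumption, by assumption⟩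

lemma w0mem (c : ℕ) (h : c < 2*m) (hw : wS m S c = 0) :
    ((0:Fin 2), (⟨c,h⟩ : Fin (2*m))) ∉ S ∧ ((1:Fin 2), (⟨c,h⟩ : Fin (2*m))) ∉ S := by
  rw [wS, dif_pos h] at hw
  split_ifs at hw <;> first | omega | exact ⟨by assumption, by assumption⟩

lemma w1mem (c : ℕ) (h : c < 2*m) (hw : wS m S c = 1) :
    (((0:Fin 2), (⟨c,h⟩ : Fin (2*m))) ∈ S ∧ ((1:Fin 2), (⟨c,h⟩ : Fin (2*m))) ∉ S)
    ∨ (((0:Fin 2), (⟨c,h⟩ : Fin (2*m))) ∉ S ∧ ((1:Fin 2), (⟨c,h⟩ : Fin (2*m))) ∈ S) := by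
  rw [wS, dif_pos h] at hw
  split_ifs at hw <;>
    first | omega | exact Or.inl ⟨by assumption, by assumption⟩
          | exact Or.inr ⟨by assumption, by assumption⟩

lemma wS_pos (c : ℕ) (hw : wS m S c ≠ 0) : c < 2*m := by
  by_contra h
  exact hw (wS_high m S c (by omega))

variable (hNon : Nonatt S)

include hNon in
lemma no_diag (c : ℕ) (h1 : c < 2*m) (h2 : c+1 < 2*m) (r r' : Fin 2) (hrr : r ≠ r')
    (hp : (r, (⟨c, h1⟩ : Fin (2*m))) ∈ S) (hq : (r', (⟨c+1, h2⟩ : Fin (2*m))) ∈ S) :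
    False := by
  refine hNon _ hp _ hq ?_ ?_
  · intro h
    rw [Prod.ext_iff] at h
    have := h.2
    rw [Fin.ext_iff] at this
    simp at this
  · have hv : (r : ℕ) ≠ (r' : ℕ) := fun h => hrr (Fin.ext h)
    have hr1 : (r : ℕ) < 2 := r.isLt
    have hr2 : (r' : ℕ) < 2 := r'.isLt
    constructor
    · rw [abs_eq (by norm_num : (0:ℤ) ≤ 1)]; simp only []; omega
    · rw [abs_eq (by norm_num : (0:ℤ) ≤ 1)]; simp only []; omega

include hNon in
lemma wL2 (c : ℕ) (hw : wS m S c = 2) : wS m S (c+1) = 0 := by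
  have h1 : c < 2*m := wS_pos m S c (by omega)
  by_cases h2 : c + 1 < 2*m
  · obtain ⟨ht, hb⟩ := w2mem m S c h1 hw
    rw [wS, dif_pos h2]
    rw [if_neg, if_neg]
    · intro hmem
      exact no_diag m S hNon c h1 h2 0 1 (by decide) ht hmem
    · intro hmem
      exact no_diag m S hNon c h1 h2 1 0 (by decide) hb hmem
  · exact wS_high m S _ (by omega)

include hNon in
lemma wL3 (c : ℕ) (hw : wS m S (c+1) = 2) : wS m S c = 0 := by
  have h2 : c + 1 < 2*m := wS_pos m S (c+1) (by omega)
  have h1 : c < 2*m := by omega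
  obtain ⟨ht, hb⟩ := w2mem m S (c+1) h2 hw
  rw [wS, dif_pos h1]
  rw [if_neg, if_neg]
  · intro hmem
    exact no_diag m S hNon c h1 h2 1 0 (by decide) hmem ht
  · intro hmem
    exact no_diag m S hNon c h1 h2 0 1 (by decide) hmem hb

variable (hcard : S.card = 2*m)

include hcard in
lemma PS_total : PS m S (2*m) = 2*m := by
  have h1 : S = Finset.univ.filter (· ∈ S) := by simp
  have h2 : S.card = ∑ p : Fin 2 × Fin (2*m), if p ∈ S then 1 else 0 := by
    conv_lhs => rw [h1]
    rw [Finset.card_filter]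
  rw [Fintype.sum_prod_type, Fin.sum_univ_two] at h2
  have h3 : PS m S (2*m) = ∑ c : Fin (2*m), wS m S c.val := by
    rw [PS, ← Fin.sum_univ_eq_sum_range]
  have h4 : ∀ c : Fin (2*m), wS m S c.val
      = (if ((0:Fin 2), c) ∈ S then 1 else 0) + (if ((1:Fin 2), c) ∈ S then 1 else 0) := by
    intro c
    rw [wS, dif_pos c.isLt]
  rw [h3]
  calc ∑ c : Fin (2*m), wS m S c.val
      = ∑ c : Fin (2*m), ((if ((0:Fin 2), c) ∈ S then 1 else 0)
          + (if ((1:Fin 2), c) ∈ S then 1 else 0)) := by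
        exact Finset.sum_congr rfl (fun c _ => h4 c)
    _ = 2*m := by rw [Finset.sum_add_distrib, ← h2, hcard]

include hcard in
lemma PS_le_total : ∀ k, PS m S k ≤ 2*m := by
  have stable : ∀ t, PS m S (2*m + t) = PS m S (2*m) := by
    intro t
    induction t with
    | zero => rfl
    | succ t ih => rw [show 2*m + (t+1) = (2*m+t)+1 by omega, PS_succ, ih,
        wS_high m S _ (by omega)]; omega
  intro k
  by_cases hk : k ≤ 2*m
  · calc PS m S k ≤ PS m S (2*m) := by
          apply Finset.sum_le_sum_of_subset
          exact Finset.range_subset_range.mpr hk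
      _ = 2*m := PS_total m S hcard
  · rw [show k = 2*m + (k - 2*m) by omega, stable, PS_total m S hcard]

include hNon in
lemma prefixA : ∀ k, PS m S k ≤ k + 1 ∧ (PS m S k = k + 1 → wS m S k = 0) := by
  intro k
  induction k with
  | zero => exact ⟨by simp [PS_zero], fun h => by simp [PS_zero] at h⟩
  | succ k ih =>
    have hsucc := PS_succ m S k
    have hw := wS_le2 m S k
    by_cases hwk : wS m S k = 2
    · have hk0 := wL2 m S hNon k hwk
      have hle : PS m S k ≤ k := by
        rcases Nat.lt_or_ge (PS m S k) (k+1) with h | h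
        · omega
        · have := ih.1
          have heq : PS m S k = k + 1 := by omega
          have := ih.2 heq
          omega
      exact ⟨by omega, fun _ => hk0⟩
    · constructor
      · have := ih.1; omega
      · intro heq
        have h1 : PS m S k = k + 1 := by omega
        have := ih.2 h1
        omega

include hNon hcard in
lemma suffixR : ∀ d k, k + d = 2*m → (k ≤ PS m S k + 1 ∧ (PS m S k + 1 = k → wS m S (k-1) = 0)) := by
  intro d
  induction d with
  | zero =>
    intro k hk
    have : PS m S k = 2*m := by rw [show k = 2*m by omega]; exact PS_total m S hcard
    omega
  | succ d ih =>
    intro k hk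
    obtain ⟨ihb, ihe⟩ := ih (k+1) (by omega)
    have hsucc := PS_succ m S k
    have hw := wS_le2 m S k
    by_cases h1 : PS m S (k+1) + 1 = k + 1
    · have := ihe h1
      rw [show k + 1 - 1 = k by omega] at this
      omega
    · have hbig : k + 1 ≤ PS m S (k+1) := by omega
      constructor
      · omega
      · intro heq
        have hk1 : 1 ≤ k := by omega
        have hw2 : wS m S k = 2 := by omega
        have := wL3 m S hNon (k-1) (by rw [show k - 1 + 1 = k by omega]; exact hw2)
        exact this

include hNon hcard in
lemma suffixR' : ∀ k, k ≤ 2*m → (k ≤ PS m S k + 1 ∧ (PS m S k + 1 = k → wS m S (k-1) = 0)) :=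
  fun k hk => suffixR m S hNon hcard (2*m - k) k (by omega)

include hNon in
lemma s2down (k : ℕ) (h : PS m S k = k + 1) :
    1 ≤ k ∧ PS m S (k-1) = k - 1 ∧ wS m S (k-1) = 2 := by
  have hk : 1 ≤ k := by
    by_contra hk
    have : k = 0 := by omega
    rw [this, PS_zero] at h
    omega
  have hsucc := PS_succ m S (k-1)
  rw [show k - 1 + 1 = k by omega] at hsucc
  have hw := wS_le2 m S (k-1)
  obtain ⟨hb, he⟩ := prefixA m S hNon (k-1)
  by_cases heq : PS m S (k-1) = (k-1) + 1
  · have := he heq; omega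
  · omega

include hNon in
lemma chain2 (k : ℕ) (h : PS m S k = k + 1) (h2 : 2 ≤ k) : PS m S (k-2) = (k-2) + 1 := by
  obtain ⟨_, hP, hw⟩ := s2down m S hNon k h
  have h0 : wS m S (k-2) = 0 :=
    wL3 m S hNon (k-2) (by rw [show k - 2 + 1 = k - 1 by omega]; exact hw)
  have hsucc := PS_succ m S (k-2)
  rw [show k - 2 + 1 = k - 1 by omega] at hsucc
  omega

include hNon in
lemma parity2 : ∀ k, PS m S k = k + 1 → k % 2 = 1 := by
  intro k
  induction k using Nat.strong_induction_on with
  | _ k ih =>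
    intro h
    rcases Nat.lt_or_ge k 2 with hk | hk
    · interval_cases k
      · rw [PS_zero] at h; omega
      · rfl
    · have := chain2 m S hNon k h hk
      have := ih (k-2) (by omega) this
      omega

include hNon hcard in
lemma up0 (k : ℕ) (hk : k + 2 ≤ 2*m) (h : PS m S k + 1 = k) :
    PS m S (k+2) + 1 = k + 2 ∧ wS m S k = 2 ∧ wS m S (k+1) = 0 := by
  obtain ⟨hb, he⟩ := suffixR' m S hNon hcard (k+1) (by omega)
  have hs1 := PS_succ m S k
  have hs2 := PS_succ m S (k+1)
  rw [show k+1+1 = k+2 by omega] at hs2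
  have hw := wS_le2 m S k
  by_cases h1 : PS m S (k+1) + 1 = k + 1
  · have := he h1
    rw [show k + 1 - 1 = k by omega] at this
    omega
  · have hw2 : wS m S k = 2 := by omega
    have h0 : wS m S (k+1) = 0 := wL2 m S hNon k hw2
    omega

include hNon hcard in
lemma parity0 : ∀ d k, k + d = 2*m → PS m S k + 1 = k → d % 2 = 1 := by
  intro d
  induction d using Nat.strong_induction_on with
  | _ d ih =>
    intro k hk h
    rcases Nat.lt_or_ge d 2 with hd | hd
    · interval_cases d
      · have := PS_total m S hcard
        rw [show k = 2*m by omega] at h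
        omega
      · rfl
    · obtain ⟨h2, _, _⟩ := up0 m S hNon hcard k (by omega) h
      have := ih (d-2) (by omega) (k+2) (by omega) h2
      omega

include hNon hcard in
lemma PS_even (k : ℕ) (hk : k ≤ 2*m) (hpar : k % 2 = 0) : PS m S k = k := by
  obtain ⟨hb, _⟩ := suffixR' m S hNon hcard k hk
  obtain ⟨hb2, _⟩ := prefixA m S hNon k
  by_cases h1 : PS m S k = k + 1
  · have := parity2 m S hNon k h1; omega
  · by_cases h2 : PS m S k + 1 = k
    · have := parity0 m S hNon hcard (2*m - k) k (by omega) h2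
      omega
    · omega

/-- number of (full, empty) column pairs at the left -/
def iFE : ℕ := Nat.findGreatest (fun i => ∀ r < i, PS m S (2*r+1) = 2*r+2) m

/-- number of (empty, full) column pairs at the right -/
def jEF : ℕ := Nat.findGreatest (fun j => ∀ r < j, PS m S (2*m - (2*r+1)) + 1 = 2*m - (2*r+1)) m

lemma iFE_le : iFE m S ≤ m := Nat.findGreatest_le m
lemma jEF_le : jEF m S ≤ m := Nat.findGreatest_le m

lemma iFE_spec : ∀ r < iFE m S, PS m S (2*r+1) = 2*r+2 :=
  Nat.findGreatest_spec (P := fun i => ∀ r < i, PS m S (2*r+1) = 2*r+2)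
    (Nat.zero_le m) (fun r hr => absurd hr (Nat.not_lt_zero r))

lemma jEF_spec : ∀ r < jEF m S, PS m S (2*m - (2*r+1)) + 1 = 2*m - (2*r+1) :=
  Nat.findGreatest_spec (P := fun j => ∀ r < j, PS m S (2*m - (2*r+1)) + 1 = 2*m - (2*r+1))
    (Nat.zero_le m) (fun r hr => absurd hr (Nat.not_lt_zero r))

include hNon in
lemma chainAll2 : ∀ r, PS m S (2*r+1) = 2*r+2 → ∀ r' ≤ r, PS m S (2*r'+1) = 2*r'+2 := by
  intro r
  induction r with
  | zero => intro h r' hr'; rw [show r' = 0 by omega]; exact h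
  | succ r ih =>
    intro h r' hr'
    have hprev : PS m S (2*r+1) = 2*r+2 := by
      have := chain2 m S hNon (2*(r+1)+1) (by rw [h]) (by omega)
      rw [show 2*(r+1)+1-2 = 2*r+1 by omega] at this
      omega
    rcases Nat.lt_or_ge r' (r+1) with hlt | hge
    · exact ih hprev r' (by omega)
    · rw [show r' = r + 1 by omega]; exact h

include hNon hcard in
lemma s2_iff (k : ℕ) : PS m S k = k + 1 ↔ (k % 2 = 1 ∧ k < 2 * iFE m S) := by
  constructor
  · intro h
    have hodd := parity2 m S hNon k h
    have hle : k + 1 ≤ 2*m := by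
      have := PS_le_total m S hcard k
      omega
    set r := (k-1)/2 with hr
    have hk : k = 2*r+1 := by omega
    have hchain := chainAll2 m S hNon r (by rw [← hk, h, hk]) 
    have hprop : ∀ r' < r + 1, PS m S (2*r'+1) = 2*r'+2 := fun r' hr' => hchain r' (by omega)
    have := Nat.le_findGreatest (P := fun i => ∀ r < i, PS m S (2*r+1) = 2*r+2)
      (show r + 1 ≤ m by omega) hprop
    rw [iFE]
    omega
  · rintro ⟨hodd, hlt⟩
    have := iFE_spec m S ((k-1)/2) (by omega)
    rw [show 2*((k-1)/2)+1 = k by omega] at this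
    omega

include hNon hcard in
lemma chainAll0 : ∀ r, 2*r+1 ≤ 2*m → PS m S (2*m - (2*r+1)) + 1 = 2*m - (2*r+1) →
    ∀ r' ≤ r, PS m S (2*m - (2*r'+1)) + 1 = 2*m - (2*r'+1) := by
  intro r
  induction r with
  | zero => intro hb h r' hr'; rw [show r' = 0 by omega]; exact h
  | succ r ih =>
    intro hb h r' hr'
    have hnext : PS m S (2*m - (2*r+1)) + 1 = 2*m - (2*r+1) := by
      obtain ⟨h2, _, _⟩ := up0 m S hNon hcard (2*m - (2*(r+1)+1)) (by omega) h
      rw [show 2*m - (2*(r+1)+1) + 2 = 2*m - (2*r+1) by omega] at h2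
      exact h2
    rcases Nat.lt_or_ge r' (r+1) with hlt | hge
    · exact ih (by omega) hnext r' (by omega)
    · rw [show r' = r + 1 by omega]; exact h

include hNon hcard in
lemma s0_iff (k : ℕ) (hk : k ≤ 2*m) :
    PS m S k + 1 = k ↔ (k % 2 = 1 ∧ 2*m - 2 * jEF m S < k ∧ k < 2*m) := by
  constructor
  · intro h
    have hk1 : 1 ≤ k := by
      by_contra hh
      rw [show k = 0 by omega, PS_zero] at h
      omega
    have hpar := parity0 m S hNon hcard (2*m - k) k (by omega) h
    have hk2m : k < 2*m := by
      by_contra hh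
      have : k = 2*m := by omega
      rw [this, PS_total m S hcard] at h
      omega
    set r := (2*m - k - 1)/2 with hr
    have hk' : k = 2*m - (2*r+1) := by omega
    have hchain := chainAll0 m S hNon hcard r (by omega) (by rw [← hk']; exact h)
    have hprop : ∀ r' < r + 1, PS m S (2*m - (2*r'+1)) + 1 = 2*m - (2*r'+1) :=
      fun r' hr' => hchain r' (by omega)
    have := Nat.le_findGreatest
      (P := fun j => ∀ r < j, PS m S (2*m - (2*r+1)) + 1 = 2*m - (2*r+1))
      (show r + 1 ≤ m by omega) hprop
    rw [jEF]
    constructor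
    · omega
    constructor
    · omega
    · omega
  · rintro ⟨hodd, hgt, hlt⟩
    have := jEF_spec m S ((2*m - k - 1)/2) (by have := jEF_le m S; omega)
    rw [show 2*m - (2*((2*m - k - 1)/2)+1) = k by omega] at this
    omega

include hNon hcard in
lemma ij_le : iFE m S + jEF m S ≤ m := by
  by_contra h
  have hi := iFE_le m S
  have hj := jEF_le m S
  have hj1 : 1 ≤ jEF m S := by omega
  set k := 2*(m - jEF m S) + 1 with hk
  have h1 : PS m S k = k + 1 := by
    rw [s2_iff m S hNon hcard]
    omega
  have h2 : PS m S k + 1 = k := by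
    rw [s0_iff m S hNon hcard k (by omega)]
    omega
  omega

include hNon hcard in
lemma PS_mid (k : ℕ) (hk : k ≤ 2*m) (h1 : 2 * iFE m S ≤ k) (h2 : k ≤ 2*m - 2 * jEF m S) :
    PS m S k = k := by
  rcases Nat.even_or_odd k with he | ho
  · exact PS_even m S hNon hcard k hk (Nat.even_iff.mp he)
  · have ho' : k % 2 = 1 := Nat.odd_iff.mp ho
    obtain ⟨hb, _⟩ := suffixR' m S hNon hcard k hk
    obtain ⟨hb2, _⟩ := prefixA m S hNon k
    by_cases hs2 : PS m S k = k + 1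
    · rw [s2_iff m S hNon hcard] at hs2; omega
    · by_cases hs0 : PS m S k + 1 = k
      · rw [s0_iff m S hNon hcard k hk] at hs0; omega
      · omega

include hNon hcard in
lemma w_a (c : ℕ) (hc : c < 2*m) (hpar : c % 2 = 0) (hlt : c < 2 * iFE m S) :
    wS m S c = 2 := by
  have h1 : PS m S c = c := PS_even m S hNon hcard c (by omega) hpar
  have h2 : PS m S (c+1) = c + 2 := by
    have : PS m S (c+1) = (c+1) + 1 := by
      rw [s2_iff m S hNon hcard]; omega
    omega
  have := PS_succ m S c
  omega

include hNon hcard in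
lemma w_b (c : ℕ) (hpar : c % 2 = 1) (hlt : c < 2 * iFE m S) :
    wS m S c = 0 := by
  have h1 : PS m S c = c + 1 := by rw [s2_iff m S hNon hcard]; omega
  exact (prefixA m S hNon c).2 h1

include hNon hcard in
lemma w_c (c : ℕ) (h1 : 2 * iFE m S ≤ c) (h2 : c + 2 * jEF m S < 2*m) :
    wS m S c = 1 := by
  have hj := jEF_le m S
  have p1 : PS m S c = c := PS_mid m S hNon hcard c (by omega) h1 (by omega)
  have p2 : PS m S (c+1) = c+1 := PS_mid m S hNon hcard (c+1) (by omega) (by omega) (by omega)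
  have := PS_succ m S c
  omega

include hNon hcard in
lemma w_d (c : ℕ) (hc : c < 2*m) (hpar : c % 2 = 0) (hge : 2*m - 2 * jEF m S ≤ c) :
    wS m S c = 0 := by
  have hj := jEF_le m S
  have p1 : PS m S c = c := PS_even m S hNon hcard c (by omega) hpar
  have p2 : PS m S (c+1) + 1 = c + 1 := by
    rw [s0_iff m S hNon hcard (c+1) (by omega)]
    omega
  have := PS_succ m S c
  omega

include hNon hcard in
lemma w_e (c : ℕ) (hc : c < 2*m) (hpar : c % 2 = 1) (hge : 2*m - 2 * jEF m S ≤ c) :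
    wS m S c = 2 := by
  have hj := jEF_le m S
  have p1 : PS m S c + 1 = c := by
    rw [s0_iff m S hNon hcard c (by omega)]
    omega
  have p2 : PS m S (c+1) = c+1 := PS_even m S hNon hcard (c+1) (by omega) (by omega)
  have := PS_succ m S c
  omega

/-- there is a pawn in the top row of column c -/
def topS (c : ℕ) : Prop := ∃ h : c < 2*m, ((0:Fin 2), (⟨c,h⟩ : Fin (2*m))) ∈ S

lemma topS_mem (c : ℕ) (h : c < 2*m) : topS m S c ↔ ((0:Fin 2), (⟨c,h⟩ : Fin (2*m))) ∈ S :=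
  ⟨fun ⟨_, hm⟩ => hm, fun hm => ⟨h, hm⟩⟩

include hNon hcard in
lemma row_step (c : ℕ) (hcl : 2 * iFE m S ≤ c) (hcu : c + 1 + 2 * jEF m S < 2*m) :
    topS m S (c+1) ↔ topS m S c := by
  have h2 : c + 1 < 2*m := by omega
  have h1 : c < 2*m := by omega
  have w1 := w_c m S hNon hcard c hcl (by omega)
  have w2 := w_c m S hNon hcard (c+1) (by omega) (by omega)
  constructor
  · intro ht1
    rcases w1mem m S c h1 w1 with ⟨ht, _⟩ | ⟨_, hb⟩
    · exact ⟨h1, ht⟩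
    · exfalso
      exact no_diag m S hNon c h1 h2 1 0 (by decide) hb ((topS_mem m S (c+1) h2).mp ht1)
  · intro ht0
    rcases w1mem m S (c+1) h2 w2 with ⟨ht, _⟩ | ⟨_, hb⟩
    · exact ⟨h2, ht⟩
    · exfalso
      exact no_diag m S hNon c h1 h2 0 1 (by decide) ((topS_mem m S c h1).mp ht0) hb

include hNon hcard in
lemma rowconst : ∀ d, 2 * iFE m S + d + 2 * jEF m S < 2*m →
    (topS m S (2 * iFE m S + d) ↔ topS m S (2 * iFE m S)) := by
  intro d
  induction d with
  | zero => intro _; rfl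
  | succ d ih =>
    intro hd
    rw [show 2 * iFE m S + (d+1) = (2 * iFE m S + d) + 1 by omega]
    rw [row_step m S hNon hcard (2 * iFE m S + d) (by omega) (by omega)]
    exact ih (by omega)

include hNon hcard in
lemma pointwise (r : Fin 2) (c : Fin (2*m)) (RW : ℕ)
    (hRW0 : topS m S (2 * iFE m S) → RW = 0)
    (hRW1 : ¬ topS m S (2 * iFE m S) → RW = 1) :
    ((r, c) ∈ S ↔ memQ m (iFE m S) (m - jEF m S) RW r.val c.val) := by
  set i := iFE m S with hi
  set j := jEF m S with hj
  have hjle : j ≤ m := jEF_le m S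
  have hile : i ≤ m := iFE_le m S
  have hij : i + j ≤ m := ij_le m S hNon hcard
  have hc : (c : ℕ) < 2*m := c.isLt
  have hr2 : (r : ℕ) < 2 := r.isLt
  by_cases hA : (c : ℕ) < 2*i
  · by_cases hpar : (c : ℕ) % 2 = 0
    · -- full column
      have hw := w_a m S hNon hcard c hc hpar hA
      obtain ⟨ht, hb⟩ := w2mem m S c hc hw
      constructor
      · intro _
        unfold memQ
        omega
      · intro _
        rcases (show (r:ℕ) = 0 ∨ (r:ℕ) = 1 by omega) with h0 | h1
        · have : r = 0 := Fin.ext h0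
          rw [this]
          exact ht
        · have : r = 1 := Fin.ext h1
          rw [this]
          exact hb
    · -- empty column
      have hw := w_b m S hNon hcard c (by omega) hA
      obtain ⟨ht, hb⟩ := w0mem m S c hc hw
      constructor
      · intro hmem
        exfalso
        rcases (show (r:ℕ) = 0 ∨ (r:ℕ) = 1 by omega) with h0 | h1
        · exact ht (by rwa [show r = 0 from Fin.ext h0] at hmem)
        · exact hb (by rwa [show r = 1 from Fin.ext h1] at hmem)
      · intro hq
        unfold memQ at hq
        omega
  · by_cases hB : (c : ℕ) + 2*j < 2*m
    · -- middle column
      have hw := w_c m S hNon hcard c (by omega) hB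
      have hrc := rowconst m S hNon hcard ((c:ℕ) - 2*i) (by omega)
      rw [show 2*i + ((c:ℕ) - 2*i) = (c:ℕ) by omega] at hrc
      by_cases htop : topS m S (2*i)
      · have hRW := hRW0 htop
        have htc : topS m S (c:ℕ) := hrc.mpr htop
        have htmem := (topS_mem m S (c:ℕ) hc).mp htc
        have hbnot : ((1:Fin 2), (⟨(c:ℕ), hc⟩ : Fin (2*m))) ∉ S := by
          rcases w1mem m S c hc hw with ⟨_, hb⟩ | ⟨hnt, _⟩
          · exact hb
          · exact absurd htmem hnt
        rcases (show (r:ℕ) = 0 ∨ (r:ℕ) = 1 by omega) with h0 | h1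
        · rw [show r = 0 from Fin.ext h0]
          constructor
          · intro _
            unfold memQ
            omega
          · intro _
            exact htmem
        · rw [show r = 1 from Fin.ext h1]
          constructor
          · intro hmem
            exact absurd hmem hbnot
          · intro hq
            unfold memQ at hq
            omega
      · have hRW := hRW1 htop
        have htc : ¬ topS m S (c:ℕ) := fun h => htop (hrc.mp h)
        have htnot : ((0:Fin 2), (⟨(c:ℕ), hc⟩ : Fin (2*m))) ∉ S :=
          fun h => htc ⟨hc, h⟩
        have hbmem : ((1:Fin 2), (⟨(c:ℕ), hc⟩ : Fin (2*m))) ∈ S := by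
          rcases w1mem m S c hc hw with ⟨ht, _⟩ | ⟨_, hb⟩
          · exact absurd ht htnot
          · exact hb
        rcases (show (r:ℕ) = 0 ∨ (r:ℕ) = 1 by omega) with h0 | h1
        · rw [show r = 0 from Fin.ext h0]
          constructor
          · intro hmem
            exact absurd hmem htnot
          · intro hq
            unfold memQ at hq
            omega
        · rw [show r = 1 from Fin.ext h1]
          constructor
          · intro _
            unfold memQ
            omega
          · intro _
            exact hbmem
    · by_cases hpar : (c : ℕ) % 2 = 1
      · -- full column on the right
        have hw := w_e m S hNon hcard c hc hpar (by omega)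
        obtain ⟨ht, hb⟩ := w2mem m S c hc hw
        constructor
        · intro _
          unfold memQ
          omega
        · intro _
          rcases (show (r:ℕ) = 0 ∨ (r:ℕ) = 1 by omega) with h0 | h1
          · rw [show r = 0 from Fin.ext h0]; exact ht
          · rw [show r = 1 from Fin.ext h1]; exact hb
      · -- empty column on the right
        have hw := w_d m S hNon hcard c hc (by omega) (by omega)
        obtain ⟨ht, hb⟩ := w0mem m S c hc hw
        constructor
        · intro hmem
          exfalso
          rcases (show (r:ℕ) = 0 ∨ (r:ℕ) = 1 by omega) with h0 | h1
          · exact ht (by rwa [show r = 0 from Fin.ext h0] at hmem)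
          · exact hb (by rwa [show r = 1 from Fin.ext h1] at hmem)
        · intro hq
          unfold memQ at hq
          omega

include hNon hcard in
theorem classify : ∃ a b, a ≤ m ∧ b ≤ m ∧ ∀ (r : Fin 2) (c : Fin (2*m)),
    ((r, c) ∈ S ↔ memQ m (min a b) (max a b) (if a ≤ b then 0 else 1) r.val c.val) := by
  have hjle : jEF m S ≤ m := jEF_le m S
  have hile : iFE m S ≤ m := iFE_le m S
  have hij : iFE m S + jEF m S ≤ m := ij_le m S hNon hcard
  by_cases htop : topS m S (2 * iFE m S)
  · refine ⟨iFE m S, m - jEF m S, by omega, by omega, fun r c => ?_⟩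
    rw [min_eq_left (by omega), max_eq_right (by omega), if_pos (by omega)]
    exact pointwise m S hNon hcard r c 0 (fun _ => rfl) (fun hn => absurd htop hn)
  · refine ⟨m - jEF m S, iFE m S, by omega, by omega, fun r c => ?_⟩
    rw [min_eq_right (by omega), max_eq_left (by omega)]
    rw [pointwise m S hNon hcard r c 1 (fun h => absurd h htop) (fun _ => rfl)]
    have hr2 : (r : ℕ) < 2 := r.isLt
    by_cases hle : m - jEF m S ≤ iFE m S
    · rw [if_pos hle]
      unfold memQ
      omega
    · rw [if_neg hle]

end Complete


theorem stmt3 (m : ℕ) (hm : 1 ≤ m) :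
    ((Finset.univ : Finset (Fin 2 × Fin (2 * m))).powerset.filter
        (fun S => S.card = 2 * m ∧ Nonatt S)).card = (m + 1) ^ 2 := by
  classical
  have hinj : Function.Injective (fun q : Fin (m+1) × Fin (m+1) => DD m q.1.val q.2.val) := by
    intro q q' h
    simp only at h
    set a := q.1.val; set b := q.2.val; set a' := q'.1.val; set b' := q'.2.val
    have ha : a ≤ m := by omega
    have hb : b ≤ m := by have := q.2.isLt; omega
    have ha' : a' ≤ m := by have := q'.1.isLt; omega
    have hb' : b' ≤ m := by have := q'.2.isLt; omega
    have hE : ∀ r < 2, ∀ c < 2*m,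
        (memQ m (min a b) (max a b) (if a ≤ b then 0 else 1) r c ↔
         memQ m (min a' b') (max a' b') (if a' ≤ b' then 0 else 1) r c) := by
      intro r hr c hc
      have := Finset.ext_iff.mp h ((⟨r, hr⟩ : Fin 2), (⟨c, hc⟩ : Fin (2*m)))
      simpa [DD] using this
    obtain ⟨hu, hv, hrw⟩ := memQ_inj m (min a b) (max a b) (if a ≤ b then 0 else 1)
      (min a' b') (max a' b') (if a' ≤ b' then 0 else 1)
      (min_le_max) (by omega) (min_le_max) (by omega)
      (by split_ifs <;> omega) (by split_ifs <;> omega) hE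
    have hcomp : a = a' ∧ b = b' := by
      rcases Nat.lt_or_ge (min a b) (max a b) with hlt | hge
      · have hr := hrw hlt
        split_ifs at hr <;> omega
      · omega
    have e1 : q.1 = q'.1 := Fin.ext hcomp.1
    have e2 : q.2 = q'.2 := Fin.ext hcomp.2
    exact Prod.ext e1 e2
  have himg : ((Finset.univ : Finset (Fin 2 × Fin (2 * m))).powerset.filter
        (fun S => S.card = 2 * m ∧ Nonatt S))
      = Finset.image (fun q : Fin (m+1) × Fin (m+1) => DD m q.1.val q.2.val) Finset.univ := by
    ext T
    simp only [Finset.mem_filter, Finset.mem_powerset, Finset.mem_image, Finset.mem_univ,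
      Finset.subset_univ, true_and]
    constructor
    · rintro ⟨hc, hn⟩
      obtain ⟨a, b, hale, hble, hiff⟩ := classify m T hn hc
      refine ⟨(⟨a, by omega⟩, ⟨b, by omega⟩), ?_⟩
      ext p
      obtain ⟨r, c⟩ := p
      simp only [DD, Finset.mem_filter, Finset.mem_univ, true_and]
      exact (hiff r c).symm
    · rintro ⟨q, rfl⟩
      exact ⟨card_DD m q.1.val q.2.val (by omega) (by omega), nonatt_DD m q.1.val q.2.val⟩
  rw [himg, Finset.card_image_of_injective _ hinj]
  simp only [Finset.card_univ, Fintype.card_prod, Fintype.card_fin]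
  ring
end

section
/- For every m ≥ 1, the number of sets of 2m² cells in a 2m×2m board with no two cells diagonally adjacent is exactly (binomial(2m, m))². -/
namespace Pawn4

lemma pawnAdj_iff {a b : ℕ} (p q : Fin a × Fin b) :
    PawnAdj p q ↔ ((p.1 : ℕ) = (q.1 : ℕ) + 1 ∨ (q.1 : ℕ) = (p.1 : ℕ) + 1) ∧
      ((p.2 : ℕ) = (q.2 : ℕ) + 1 ∨ (q.2 : ℕ) = (p.2 : ℕ) + 1) := by
  unfold PawnAdj
  rw [abs_eq (by norm_num : (0:ℤ) ≤ 1), abs_eq (by norm_num : (0:ℤ) ≤ 1)]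
  constructor <;> intro h <;> exact ⟨by omega, by omega⟩

lemma card_filter_lt (m t : ℕ) (ht : t ≤ m) :
    ((Finset.univ : Finset (Fin m)).filter (fun k : Fin m => (k : ℕ) < t)).card = t := by
  rcases eq_or_lt_of_le ht with h | h
  · subst h
    simp [Finset.filter_true_of_mem (fun (k : Fin _) _ => k.isLt)]
  · have : ((Finset.univ : Finset (Fin m)).filter (fun k : Fin m => (k : ℕ) < t)) = Finset.Iio ⟨t, h⟩ := by
      ext k; simp [Fin.lt_def]
    rw [this, Fin.card_Iio]

lemma card_filter_ge (m t : ℕ) (ht : t ≤ m) :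
    ((Finset.univ : Finset (Fin m)).filter (fun k : Fin m => t ≤ (k : ℕ))).card = m - t := by
  have h1 := card_filter_lt m t ht
  have h2 : ((Finset.univ : Finset (Fin m)).filter (fun k : Fin m => t ≤ (k : ℕ)))
      = (Finset.univ : Finset (Fin m)).filter (fun k : Fin m => ¬ ((k : ℕ) < t)) := by
    ext k; simp [Nat.not_lt]
  rw [h2, Finset.filter_not, Finset.card_sdiff_of_subset (Finset.filter_subset _ _), h1,
    Finset.card_univ, Fintype.card_fin]

section
variable {m : ℕ}

def ev (k : Fin m) : Fin (2*m) := ⟨2*(k:ℕ), by have := k.isLt; omega⟩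
def od (k : Fin m) : Fin (2*m) := ⟨2*(k:ℕ)+1, by have := k.isLt; omega⟩

def patMem (a c : Fin m → Fin (m+1)) (p : Fin (2*m) × Fin (2*m)) : Prop :=
  ∃ h : (p.2 : ℕ)/2 < m,
    ((p.1:ℕ) % 2 = 0 ∧ (p.2:ℕ) % 2 = 0 ∧ (p.1:ℕ)/2 < (a ⟨(p.2:ℕ)/2, h⟩ : ℕ)) ∨
    ((p.1:ℕ) % 2 = 1 ∧ (p.2:ℕ) % 2 = 1 ∧ (a ⟨(p.2:ℕ)/2, h⟩ : ℕ) ≤ (p.1:ℕ)/2) ∨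
    ((p.1:ℕ) % 2 = 1 ∧ (p.2:ℕ) % 2 = 0 ∧ (c ⟨(p.2:ℕ)/2, h⟩ : ℕ) ≤ (p.1:ℕ)/2) ∨
    ((p.1:ℕ) % 2 = 0 ∧ (p.2:ℕ) % 2 = 1 ∧ (p.1:ℕ)/2 < (c ⟨(p.2:ℕ)/2, h⟩ : ℕ))

instance (a c : Fin m → Fin (m+1)) : DecidablePred (patMem a c) := by
  unfold patMem; infer_instance

def pat (a c : Fin m → Fin (m+1)) : Finset (Fin (2*m) × Fin (2*m)) :=
  Finset.univ.filter (patMem a c)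

lemma cases_cell (p : Fin (2*m) × Fin (2*m)) :
    ∃ k i : Fin m, p = (ev k, ev i) ∨ p = (ev k, od i) ∨ p = (od k, ev i) ∨ p = (od k, od i) := by
  have h1 := p.1.isLt
  have h2 := p.2.isLt
  refine ⟨⟨(p.1:ℕ)/2, by omega⟩, ⟨(p.2:ℕ)/2, by omega⟩, ?_⟩
  simp only [Prod.ext_iff, ev, od, Fin.ext_iff]
  omega

variable (a c : Fin m → Fin (m+1))

lemma pat_mem_ee (k i : Fin m) : (ev k, ev i) ∈ pat a c ↔ (k:ℕ) < (a i : ℕ) := by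
  have hk := k.isLt; have hi := i.isLt
  have e1 : (2*(k:ℕ))/2 = (k:ℕ) := by omega
  have e2 : (2*(i:ℕ))/2 = (i:ℕ) := by omega
  simp only [pat, patMem, Finset.mem_filter, Finset.mem_univ, true_and, ev, od, e1, e2]
  constructor
  · rintro ⟨h, hc⟩
    have : (⟨(i:ℕ), h⟩ : Fin m) = i := rfl
    rw [this] at hc; omega
  · intro h; exact ⟨by omega, Or.inl ⟨by omega, by omega, h⟩⟩

lemma pat_mem_oo (k i : Fin m) : (od k, od i) ∈ pat a c ↔ (a i : ℕ) ≤ (k:ℕ) := by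
  have hk := k.isLt; have hi := i.isLt
  have e1 : (2*(k:ℕ)+1)/2 = (k:ℕ) := by omega
  have e2 : (2*(i:ℕ)+1)/2 = (i:ℕ) := by omega
  simp only [pat, patMem, Finset.mem_filter, Finset.mem_univ, true_and, ev, od, e1, e2]
  constructor
  · rintro ⟨h, hc⟩
    have : (⟨(i:ℕ), h⟩ : Fin m) = i := rfl
    rw [this] at hc; omega
  · intro h; exact ⟨by omega, Or.inr (Or.inl ⟨by omega, by omega, h⟩)⟩

lemma pat_mem_oe (k i : Fin m) : (od k, ev i) ∈ pat a c ↔ (c i : ℕ) ≤ (k:ℕ) := by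
  have hk := k.isLt; have hi := i.isLt
  have e1 : (2*(k:ℕ)+1)/2 = (k:ℕ) := by omega
  have e2 : (2*(i:ℕ))/2 = (i:ℕ) := by omega
  simp only [pat, patMem, Finset.mem_filter, Finset.mem_univ, true_and, ev, od, e1, e2]
  constructor
  · rintro ⟨h, hc⟩
    have : (⟨(i:ℕ), h⟩ : Fin m) = i := rfl
    rw [this] at hc; omega
  · intro h; exact ⟨by omega, Or.inr (Or.inr (Or.inl ⟨by omega, by omega, h⟩))⟩

lemma pat_mem_eo (k i : Fin m) : (ev k, od i) ∈ pat a c ↔ (k:ℕ) < (c i : ℕ) := by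
  have hk := k.isLt; have hi := i.isLt
  have e1 : (2*(k:ℕ))/2 = (k:ℕ) := by omega
  have e2 : (2*(i:ℕ)+1)/2 = (i:ℕ) := by omega
  simp only [pat, patMem, Finset.mem_filter, Finset.mem_univ, true_and, ev, od, e1, e2]
  constructor
  · rintro ⟨h, hc⟩
    have : (⟨(i:ℕ), h⟩ : Fin m) = i := rfl
    rw [this] at hc; omega
  · intro h; exact ⟨by omega, Or.inr (Or.inr (Or.inr ⟨by omega, by omega, h⟩))⟩

/-- explicit parametrizing map for counting `pat`. -/
def patf (a c : Fin m → Fin (m+1)) (x : Fin m × Fin m × Bool) : Fin (2*m) × Fin (2*m) :=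
  if x.2.2 then
    (if (x.2.1:ℕ) < (a x.1 : ℕ) then (ev x.2.1, ev x.1) else (od x.2.1, od x.1))
  else
    (if (x.2.1:ℕ) < (c x.1 : ℕ) then (ev x.2.1, od x.1) else (od x.2.1, ev x.1))

lemma patf_inj (x y : Fin m × Fin m × Bool) (h : patf a c x = patf a c y) : x = y := by
  obtain ⟨i, k, w⟩ := x
  obtain ⟨i', k', w'⟩ := y
  simp only [patf] at h
  cases w <;> cases w' <;>
    simp only [Bool.false_eq_true, if_true, if_false, ite_true, ite_false] at h <;>
    split_ifs at h <;>
    (simp only [Prod.ext_iff, ev, od, Fin.ext_iff, Bool.false_eq_true, Bool.true_eq_false,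
        and_true, and_false] at h ⊢ <;> omega)

lemma patf_mem (x : Fin m × Fin m × Bool) : patf a c x ∈ pat a c := by
  obtain ⟨i, k, w⟩ := x
  cases w <;> simp only [patf, Bool.false_eq_true, ite_true, ite_false, if_true, if_false]
  · split_ifs with h
    · exact (pat_mem_eo a c k i).2 h
    · exact (pat_mem_oe a c k i).2 (by omega)
  · split_ifs with h
    · exact (pat_mem_ee a c k i).2 h
    · exact (pat_mem_oo a c k i).2 (by omega)

lemma patf_surj (p : Fin (2*m) × Fin (2*m)) (hp : p ∈ pat a c) :
    ∃ x : Fin m × Fin m × Bool, patf a c x = p := by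
  obtain ⟨k, i, h | h | h | h⟩ := cases_cell p <;> subst h
  · exact ⟨(i, k, true), by simp [patf, (pat_mem_ee a c k i).1 hp]⟩
  · exact ⟨(i, k, false), by simp [patf, (pat_mem_eo a c k i).1 hp]⟩
  · have h := (pat_mem_oe a c k i).1 hp
    exact ⟨(i, k, false), by simp [patf]; omega⟩
  · have h := (pat_mem_oo a c k i).1 hp
    exact ⟨(i, k, true), by simp [patf]; omega⟩

lemma pat_card : (pat a c).card = 2 * m^2 := by
  have h := Finset.card_bij (s := (Finset.univ : Finset (Fin m × Fin m × Bool)))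
    (t := pat a c) (fun x _ => patf a c x)
    (fun x _ => patf_mem a c x)
    (fun x _ y _ h => patf_inj a c x y h)
    (fun p hp => by
      obtain ⟨x, hx⟩ := patf_surj a c p hp
      exact ⟨x, Finset.mem_univ x, hx⟩)
  rw [← h, Finset.card_univ]
  simp [Fintype.card_prod]
  ring


lemma pat_nonatt (ha : Antitone a) (hc : Monotone c) : Nonatt (pat a c) := by
  intro p hp q hq hne hadj
  rw [pawnAdj_iff] at hadj
  have hA : ∀ u v : Fin m, (u:ℕ) ≤ (v:ℕ) → ((a v):ℕ) ≤ ((a u):ℕ) := fun u v h =>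
    Fin.le_def.1 (ha (show u ≤ v by rw [Fin.le_def]; exact h))
  have hC : ∀ u v : Fin m, (u:ℕ) ≤ (v:ℕ) → ((c u):ℕ) ≤ ((c v):ℕ) := fun u v h =>
    Fin.le_def.1 (hc (show u ≤ v by rw [Fin.le_def]; exact h))
  obtain ⟨k, i, hp4⟩ := cases_cell p
  obtain ⟨k', i', hq4⟩ := cases_cell q
  rcases hp4 with h1|h1|h1|h1 <;> rcases hq4 with h2|h2|h2|h2 <;> subst h1 <;> subst h2 <;>
    simp only [ev, od] at hadj <;>
    (try replace hp := (pat_mem_ee a c k i).1 hp) <;>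
    (try replace hp := (pat_mem_oo a c k i).1 hp) <;>
    (try replace hp := (pat_mem_eo a c k i).1 hp) <;>
    (try replace hp := (pat_mem_oe a c k i).1 hp) <;>
    (try replace hq := (pat_mem_ee a c k' i').1 hq) <;>
    (try replace hq := (pat_mem_oo a c k' i').1 hq) <;>
    (try replace hq := (pat_mem_eo a c k' i').1 hq) <;>
    (try replace hq := (pat_mem_oe a c k' i').1 hq) <;>
    (have m1 := hA i i') <;> (have m2 := hA i' i) <;> (have m3 := hC i i') <;>
    (have m4 := hC i' i) <;> omega


lemma nat_eq_of_lt_iff {x y n : ℕ} (hx : x ≤ n) (hy : y ≤ n)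
    (h : ∀ k < n, (k < x ↔ k < y)) : x = y := by
  rcases lt_trichotomy x y with hlt | he | hlt
  · exact absurd ((h x (by omega)).2 hlt) (by omega)
  · exact he
  · exact absurd ((h y (by omega)).1 hlt) (by omega)

lemma param_eq_of_pat_eq (a' c' : Fin m → Fin (m+1)) (h : pat a c = pat a' c') :
    a = a' ∧ c = c' := by
  constructor <;> funext i <;> apply Fin.ext
  · refine nat_eq_of_lt_iff (n := m) (by have := (a i).isLt; omega) (by have := (a' i).isLt; omega) ?_
    intro k hk
    rw [← pat_mem_ee a c ⟨k, hk⟩ i, h, pat_mem_ee]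
  · refine nat_eq_of_lt_iff (n := m) (by have := (c i).isLt; omega) (by have := (c' i).isLt; omega) ?_
    intro k hk
    rw [← pat_mem_eo a c ⟨k, hk⟩ i, h, pat_mem_eo]


lemma eq_prefix_of_dc (P : Finset (Fin m))
    (hdc : ∀ k ∈ P, ∀ j : Fin m, (j:ℕ) ≤ (k:ℕ) → j ∈ P) :
    P = Finset.univ.filter (fun k : Fin m => (k:ℕ) < P.card) := by
  ext k
  simp only [Finset.mem_filter, Finset.mem_univ, true_and]
  constructor
  · intro hk
    have hsub : (Finset.univ.filter (fun j : Fin m => (j:ℕ) < (k:ℕ)+1)) ⊆ P := by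
      intro j hj
      simp only [Finset.mem_filter, Finset.mem_univ, true_and] at hj
      exact hdc k hk j (by omega)
    have := Finset.card_le_card hsub
    rw [card_filter_lt m ((k:ℕ)+1) (by have := k.isLt; omega)] at this
    omega
  · intro hk
    by_contra hkP
    have hsub : P ⊆ (Finset.univ.filter (fun j : Fin m => (j:ℕ) < (k:ℕ))) := by
      intro j hj
      simp only [Finset.mem_filter, Finset.mem_univ, true_and]
      by_contra hjk
      exact hkP (hdc j hj k (by omega))
    have := Finset.card_le_card hsub
    rw [card_filter_lt m (k:ℕ) (by have := k.isLt; omega)] at this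
    omega

lemma eq_suffix_of_uc (P : Finset (Fin m))
    (huc : ∀ k ∈ P, ∀ j : Fin m, (k:ℕ) ≤ (j:ℕ) → j ∈ P) :
    P = Finset.univ.filter (fun k : Fin m => m - P.card ≤ (k:ℕ)) := by
  ext k
  simp only [Finset.mem_filter, Finset.mem_univ, true_and]
  constructor
  · intro hk
    have hsub : (Finset.univ.filter (fun j : Fin m => (k:ℕ) ≤ (j:ℕ))) ⊆ P := by
      intro j hj
      simp only [Finset.mem_filter, Finset.mem_univ, true_and] at hj
      exact huc k hk j hj
    have := Finset.card_le_card hsub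
    rw [card_filter_ge m (k:ℕ) (by have := k.isLt; omega)] at this
    have := k.isLt
    omega
  · intro hk
    by_contra hkP
    have hsub : P ⊆ (Finset.univ.filter (fun j : Fin m => (k:ℕ)+1 ≤ (j:ℕ))) := by
      intro j hj
      simp only [Finset.mem_filter, Finset.mem_univ, true_and]
      by_contra hjk
      exact hkP (huc j hj k (by omega))
    have h1 := Finset.card_le_card hsub
    rw [card_filter_ge m ((k:ℕ)+1) (by have := k.isLt; omega)] at h1
    have := k.isLt
    have hcle : P.card ≤ m := by
      simpa using Finset.card_le_card (Finset.subset_univ P)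
    omega

/-- white pair: cards add to at most m, equality forces prefix/suffix structure. -/
lemma pair_white (P Q : Finset (Fin m))
    (hd : ∀ k ∈ P, ∀ j ∈ Q, (j:ℕ) ≠ (k:ℕ) ∧ (j:ℕ)+1 ≠ (k:ℕ)) :
    P.card + Q.card ≤ m ∧
      (P.card + Q.card = m →
        P = Finset.univ.filter (fun k : Fin m => (k:ℕ) < P.card) ∧
        Q = Finset.univ.filter (fun k : Fin m => P.card ≤ (k:ℕ))) := by
  have hdisj : Disjoint P Q := by
    rw [Finset.disjoint_left]
    intro k hk hkQ
    exact (hd k hk k hkQ).1 rfl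
  have hcard : P.card + Q.card ≤ m := by
    rw [← Finset.card_union_of_disjoint hdisj]
    simpa using Finset.card_le_card (Finset.subset_univ (P ∪ Q))
  refine ⟨hcard, fun heq => ?_⟩
  have huniv : P ∪ Q = Finset.univ := by
    apply Finset.eq_univ_of_card
    rw [Finset.card_union_of_disjoint hdisj, heq, Fintype.card_fin]
  have hQ : Q = Pᶜ := by
    rw [Finset.compl_eq_univ_sdiff, ← huniv, Finset.union_sdiff_cancel_left hdisj]
  have hdc : ∀ k ∈ P, ∀ j : Fin m, (j:ℕ) ≤ (k:ℕ) → j ∈ P := by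
    -- downward closed: step: if k ∈ P, k = j+1 then j ∈ P; induct
    have hstep : ∀ k ∈ P, ∀ j : Fin m, (j:ℕ)+1 = (k:ℕ) → j ∈ P := by
      intro k hk j hjk
      by_contra hj
      have hjQ : j ∈ Q := by rw [hQ]; simpa using hj
      exact (hd k hk j hjQ).2 hjk
    intro k hk j hjk
    obtain ⟨d, hd'⟩ : ∃ d, (j:ℕ) + d = (k:ℕ) := ⟨(k:ℕ) - (j:ℕ), by omega⟩
    clear hjk
    induction d generalizing k with
    | zero => have : j = k := Fin.ext (by omega); rwa [this]
    | succ d ih =>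
      have hmlt := k.isLt
      have hk' : (⟨(j:ℕ) + d, by omega⟩ : Fin m) ∈ P :=
        hstep k hk ⟨(j:ℕ) + d, by omega⟩ (by simp; omega)
      exact ih _ hk' (by simp)
  have hP := eq_prefix_of_dc P hdc
  refine ⟨hP, ?_⟩
  rw [hQ]
  ext k
  have hk : k ∈ P ↔ (k:ℕ) < P.card := by
    conv_lhs => rw [hP]
    simp
  simp only [Finset.mem_compl, Finset.mem_filter, Finset.mem_univ, true_and]
  rw [hk]
  omega

/-- black pair: suffix/prefix structure. -/
lemma pair_black (P Q : Finset (Fin m))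
    (hd : ∀ k ∈ P, ∀ j ∈ Q, (j:ℕ) ≠ (k:ℕ) ∧ (k:ℕ)+1 ≠ (j:ℕ)) :
    P.card + Q.card ≤ m ∧
      (P.card + Q.card = m →
        P = Finset.univ.filter (fun k : Fin m => m - P.card ≤ (k:ℕ)) ∧
        Q = Finset.univ.filter (fun k : Fin m => (k:ℕ) < m - P.card)) := by
  have hdisj : Disjoint P Q := by
    rw [Finset.disjoint_left]
    intro k hk hkQ
    exact (hd k hk k hkQ).1 rfl
  have hcard : P.card + Q.card ≤ m := by
    rw [← Finset.card_union_of_disjoint hdisj]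
    simpa using Finset.card_le_card (Finset.subset_univ (P ∪ Q))
  refine ⟨hcard, fun heq => ?_⟩
  have huniv : P ∪ Q = Finset.univ := by
    apply Finset.eq_univ_of_card
    rw [Finset.card_union_of_disjoint hdisj, heq, Fintype.card_fin]
  have hQ : Q = Pᶜ := by
    rw [Finset.compl_eq_univ_sdiff, ← huniv, Finset.union_sdiff_cancel_left hdisj]
  have huc : ∀ k ∈ P, ∀ j : Fin m, (k:ℕ) ≤ (j:ℕ) → j ∈ P := by
    have hstep : ∀ k ∈ P, ∀ j : Fin m, (k:ℕ)+1 = (j:ℕ) → j ∈ P := by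
      intro k hk j hjk
      by_contra hj
      have hjQ : j ∈ Q := by rw [hQ]; simpa using hj
      exact (hd k hk j hjQ).2 hjk
    intro k hk j hjk
    obtain ⟨d, hd'⟩ : ∃ d, (k:ℕ) + d = (j:ℕ) := ⟨(j:ℕ) - (k:ℕ), by omega⟩
    clear hjk
    induction d generalizing k with
    | zero => have : j = k := Fin.ext (by omega); rwa [this]
    | succ d ih =>
      have hmlt := j.isLt
      have hk' : (⟨(k:ℕ) + 1, by omega⟩ : Fin m) ∈ P :=
        hstep k hk ⟨(k:ℕ) + 1, by omega⟩ (by simp)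
      exact ih _ hk' (by simp; omega)
  have hP := eq_suffix_of_uc P huc
  refine ⟨hP, ?_⟩
  rw [hQ]
  ext k
  have hk : k ∈ P ↔ m - P.card ≤ (k:ℕ) := by
    conv_lhs => rw [hP]
    simp
  simp only [Finset.mem_compl, Finset.mem_filter, Finset.mem_univ, true_and]
  rw [hk]
  omega


variable (S : Finset (Fin (2*m) × Fin (2*m)))

def W0 (i : Fin m) : Finset (Fin m) := Finset.univ.filter (fun k => (ev k, ev i) ∈ S)
def W1 (i : Fin m) : Finset (Fin m) := Finset.univ.filter (fun k => (od k, od i) ∈ S)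
def B0 (i : Fin m) : Finset (Fin m) := Finset.univ.filter (fun k => (od k, ev i) ∈ S)
def B1 (i : Fin m) : Finset (Fin m) := Finset.univ.filter (fun k => (ev k, od i) ∈ S)

lemma ev_inj : Function.Injective (ev : Fin m → Fin (2*m)) := by
  intro x y h
  simp only [ev, Fin.ext_iff] at h ⊢
  omega

lemma od_inj : Function.Injective (od : Fin m → Fin (2*m)) := by
  intro x y h
  simp only [od, Fin.ext_iff] at h ⊢
  omega

lemma card_decomp :
    S.card = ∑ i : Fin m,
      ((W0 S i).card + (W1 S i).card + (B0 S i).card + (B1 S i).card) := by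
  rw [Finset.card_eq_sum_card_fiberwise
    (f := fun p : Fin (2*m) × Fin (2*m) => (⟨(p.2:ℕ)/2, by have := p.2.isLt; omega⟩ : Fin m))
    (t := Finset.univ) (fun p _ => Finset.mem_univ _)]
  apply Finset.sum_congr rfl
  intro i _
  have hfe : (S.filter (fun p : Fin (2*m) × Fin (2*m) =>
      (⟨(p.2:ℕ)/2, by have := p.2.isLt; omega⟩ : Fin m) = i))
      = S.filter (fun p => (p.2:ℕ)/2 = (i:ℕ)) := by
    apply Finset.filter_congr
    intro p _
    rw [Fin.ext_iff]
  rw [hfe]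
  have hA : Function.Injective (fun k : Fin m => ((ev k, ev i) : Fin (2*m) × Fin (2*m))) := by
    intro x y h
    exact ev_inj (congrArg Prod.fst h)
  have hB : Function.Injective (fun k : Fin m => ((od k, od i) : Fin (2*m) × Fin (2*m))) := by
    intro x y h
    exact od_inj (congrArg Prod.fst h)
  have hC : Function.Injective (fun k : Fin m => ((od k, ev i) : Fin (2*m) × Fin (2*m))) := by
    intro x y h
    exact od_inj (congrArg Prod.fst h)
  have hD : Function.Injective (fun k : Fin m => ((ev k, od i) : Fin (2*m) × Fin (2*m))) := by
    intro x y h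
    exact ev_inj (congrArg Prod.fst h)
  have hunion : S.filter (fun p => (p.2:ℕ)/2 = (i:ℕ))
      = (((W0 S i).image (fun k => (ev k, ev i)) ∪ (W1 S i).image (fun k => (od k, od i)))
          ∪ (B0 S i).image (fun k => (od k, ev i))) ∪ (B1 S i).image (fun k => (ev k, od i)) := by
    ext p
    simp only [Finset.mem_filter, Finset.mem_union, Finset.mem_image,
      W0, W1, B0, B1, Finset.mem_univ, true_and]
    constructor
    · rintro ⟨hpS, hpi⟩
      obtain ⟨k, i', h4 | h4 | h4 | h4⟩ := cases_cell p <;> subst h4 <;>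
        simp only [od, ev] at hpi <;>
        [skip; skip; skip; skip] <;>
        (have hii : i' = i := Fin.ext (by omega))
      · exact Or.inl (Or.inl (Or.inl ⟨k, by rw [hii] at hpS; exact hpS, by rw [hii]⟩))
      · exact Or.inr ⟨k, by rw [hii] at hpS; exact hpS, by rw [hii]⟩
      · exact Or.inl (Or.inr ⟨k, by rw [hii] at hpS; exact hpS, by rw [hii]⟩)
      · exact Or.inl (Or.inl (Or.inr ⟨k, by rw [hii] at hpS; exact hpS, by rw [hii]⟩))
    · rintro (((⟨k, hk, hp⟩ | ⟨k, hk, hp⟩) | ⟨k, hk, hp⟩) | ⟨k, hk, hp⟩) <;> subst hp <;>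
        refine ⟨hk, ?_⟩ <;> simp only [ev, od] <;> omega
  rw [hunion]
  have d1 : Disjoint ((W0 S i).image (fun k => ((ev k, ev i) : Fin (2*m) × Fin (2*m))))
      ((W1 S i).image (fun k => (od k, od i))) := by
    rw [Finset.disjoint_left]
    rintro p hp1 hp2
    simp only [Finset.mem_image] at hp1 hp2
    obtain ⟨x, _, hx⟩ := hp1
    obtain ⟨y, _, hy⟩ := hp2
    rw [← hx] at hy
    have := congrArg (fun q : Fin (2*m) × Fin (2*m) => (q.1 : ℕ)) hy
    simp only [ev, od] at this
    omega
  have d2 : Disjoint ((W0 S i).image (fun k => ((ev k, ev i) : Fin (2*m) × Fin (2*m)))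
      ∪ (W1 S i).image (fun k => (od k, od i)))
      ((B0 S i).image (fun k => (od k, ev i))) := by
    rw [Finset.disjoint_left]
    rintro p hp1 hp2
    simp only [Finset.mem_union, Finset.mem_image] at hp1 hp2
    obtain ⟨y, _, hy⟩ := hp2
    rcases hp1 with ⟨x, _, hx⟩ | ⟨x, _, hx⟩ <;> rw [← hx] at hy
    · have := congrArg (fun q : Fin (2*m) × Fin (2*m) => (q.1 : ℕ)) hy
      simp only [ev, od] at this
      omega
    · have := congrArg (fun q : Fin (2*m) × Fin (2*m) => (q.2 : ℕ)) hy
      simp only [ev, od] at this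
      omega
  have d3 : Disjoint (((W0 S i).image (fun k => ((ev k, ev i) : Fin (2*m) × Fin (2*m)))
      ∪ (W1 S i).image (fun k => (od k, od i))) ∪ (B0 S i).image (fun k => (od k, ev i)))
      ((B1 S i).image (fun k => (ev k, od i))) := by
    rw [Finset.disjoint_left]
    rintro p hp1 hp2
    simp only [Finset.mem_union, Finset.mem_image] at hp1 hp2
    obtain ⟨y, _, hy⟩ := hp2
    rcases hp1 with (⟨x, _, hx⟩ | ⟨x, _, hx⟩) | ⟨x, _, hx⟩ <;> rw [← hx] at hy
    · have := congrArg (fun q : Fin (2*m) × Fin (2*m) => (q.2 : ℕ)) hy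
      simp only [ev, od] at this
      omega
    · have := congrArg (fun q : Fin (2*m) × Fin (2*m) => (q.1 : ℕ)) hy
      simp only [ev, od] at this
      omega
    · have := congrArg (fun q : Fin (2*m) × Fin (2*m) => (q.2 : ℕ)) hy
      simp only [ev, od] at this
      omega
  rw [Finset.card_union_of_disjoint d3, Finset.card_union_of_disjoint d2,
    Finset.card_union_of_disjoint d1,
    Finset.card_image_of_injective _ hA, Finset.card_image_of_injective _ hB,
    Finset.card_image_of_injective _ hC, Finset.card_image_of_injective _ hD]


lemma steps_to_le (g : Fin m → ℕ)
    (hstep : ∀ i j : Fin m, (j:ℕ) = (i:ℕ)+1 → g j ≤ g i) :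
    ∀ i j : Fin m, (i:ℕ) ≤ (j:ℕ) → g j ≤ g i := by
  have key : ∀ d, ∀ i j : Fin m, (j:ℕ) = (i:ℕ) + d → g j ≤ g i := by
    intro d
    induction d with
    | zero =>
      intro i j h
      have : j = i := Fin.ext (by omega)
      rw [this]
    | succ d ih =>
      intro i j h
      have hlt := j.isLt
      have hmid : ((⟨(i:ℕ) + d, by omega⟩ : Fin m) : ℕ) = (i:ℕ) + d := rfl
      calc g j ≤ g ⟨(i:ℕ) + d, by omega⟩ := hstep _ j (by rw [hmid]; omega)
        _ ≤ g i := ih i _ hmid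
  intro i j h
  exact key ((j:ℕ) - (i:ℕ)) i j (by omega)

lemma exists_pat (hS : Nonatt S) (hcard : S.card = 2*m^2) :
    ∃ a c : Fin m → Fin (m+1), Antitone a ∧ Monotone c ∧ S = pat a c := by
  classical
  -- neighbouring-cell constraints inside a column pair
  have hw : ∀ i : Fin m, ∀ k ∈ W0 S i, ∀ j ∈ W1 S i,
      (j:ℕ) ≠ (k:ℕ) ∧ (j:ℕ)+1 ≠ (k:ℕ) := by
    intro i k hk j hj
    simp only [W0, W1, Finset.mem_filter, Finset.mem_univ, true_and] at hk hj
    constructor <;> intro he <;>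
      exact hS _ hk _ hj
        (fun hcon => by
          have := congrArg (fun q : Fin (2*m) × Fin (2*m) => (q.2 : ℕ)) hcon
          simp [ev, od] at this <;> omega)
        ((pawnAdj_iff _ _).2 (by simp [ev, od] <;> omega))
  have hb : ∀ i : Fin m, ∀ k ∈ B0 S i, ∀ j ∈ B1 S i,
      (j:ℕ) ≠ (k:ℕ) ∧ (k:ℕ)+1 ≠ (j:ℕ) := by
    intro i k hk j hj
    simp only [B0, B1, Finset.mem_filter, Finset.mem_univ, true_and] at hk hj
    constructor <;> intro he <;>
      exact hS _ hk _ hj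
        (fun hcon => by
          have := congrArg (fun q : Fin (2*m) × Fin (2*m) => (q.2 : ℕ)) hcon
          simp [ev, od] at this <;> omega)
        ((pawnAdj_iff _ _).2 (by simp [ev, od] <;> omega))
  have hwp := fun i => pair_white (W0 S i) (W1 S i) (hw i)
  have hbp := fun i => pair_black (B0 S i) (B1 S i) (hb i)
  -- totals force equality in every pair
  have hsum := card_decomp S
  have heach : ∀ i : Fin m,
      (W0 S i).card + (W1 S i).card = m ∧ (B0 S i).card + (B1 S i).card = m := by
    have hle : ∀ i ∈ (Finset.univ : Finset (Fin m)),
        (W0 S i).card + (W1 S i).card + (B0 S i).card + (B1 S i).card ≤ 2*m := by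
      intro i _
      have h1 := (hwp i).1
      have h2 := (hbp i).1
      omega
    have htot : ∑ i : Fin m,
        ((W0 S i).card + (W1 S i).card + (B0 S i).card + (B1 S i).card)
        = ∑ _i : Fin m, 2*m := by
      rw [← hsum, hcard, Finset.sum_const, Finset.card_univ, Fintype.card_fin,
        smul_eq_mul]
      ring
    have := (Finset.sum_eq_sum_iff_of_le hle).1 htot
    intro i
    have h3 := this i (Finset.mem_univ i)
    have h1 := (hwp i).1
    have h2 := (hbp i).1
    omega
  have hWeq := fun i => (hwp i).2 (heach i).1
  have hBeq := fun i => (hbp i).2 (heach i).2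
  have hcardle : ∀ i : Fin m, (W0 S i).card ≤ m ∧ (B0 S i).card ≤ m := by
    intro i
    have := (heach i).1
    have := (heach i).2
    omega
  -- the parameters
  refine ⟨fun i => ⟨(W0 S i).card, by have := (hcardle i).1; omega⟩,
          fun i => ⟨m - (B0 S i).card, by omega⟩, ?_, ?_, ?_⟩
  · -- Antitone a
    intro i j hij
    rw [Fin.le_def] at hij ⊢
    refine steps_to_le (fun i => (W0 S i).card) ?_ i j hij
    intro i j hj
    by_contra hlt
    push_neg at hlt
    have hm : (W0 S i).card < m := by have := (hcardle j).1; omega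
    set k : Fin m := ⟨(W0 S i).card, hm⟩ with hk
    have hk1 : k ∈ W1 S i := by
      rw [(hWeq i).2]
      simp [hk]
    have hk2 : k ∈ W0 S j := by
      rw [(hWeq j).1]
      simp only [Finset.mem_filter, Finset.mem_univ, true_and]
      exact hlt
    simp only [W0, W1, Finset.mem_filter, Finset.mem_univ, true_and] at hk1 hk2
    exact hS _ hk1 _ hk2
      (fun hcon => by
        have := congrArg (fun q : Fin (2*m) × Fin (2*m) => (q.1 : ℕ)) hcon
        simp [ev, od] at this <;> omega)
      ((pawnAdj_iff _ _).2 (by simp [ev, od] <;> omega))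
  · -- Monotone c
    intro i j hij
    rw [Fin.le_def] at hij ⊢
    simp only
    have hstep : ∀ i j : Fin m, (j:ℕ) = (i:ℕ)+1 → (B0 S j).card ≤ (B0 S i).card := by
      intro i j hj
      by_contra hlt
      push_neg at hlt
      -- c i = m - u i, c j = m - u j; u i < u j; pick k with val m - u j
      have hm : m - (B0 S j).card < m := by
        have h1 := (hcardle j).2
        omega
      set k : Fin m := ⟨m - (B0 S j).card, hm⟩ with hk
      have hk1 : k ∈ B1 S i := by
        rw [(hBeq i).2]
        simp only [Finset.mem_filter, Finset.mem_univ, true_and]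
        show m - (B0 S j).card < m - (B0 S i).card
        have := (hcardle j).2
        omega
      have hk2 : k ∈ B0 S j := by
        rw [(hBeq j).1]
        simp only [Finset.mem_filter, Finset.mem_univ, true_and]
        show m - (B0 S j).card ≤ m - (B0 S j).card
        exact le_refl _
      simp only [B0, B1, Finset.mem_filter, Finset.mem_univ, true_and] at hk1 hk2
      exact hS _ hk1 _ hk2
        (fun hcon => by
          have := congrArg (fun q : Fin (2*m) × Fin (2*m) => (q.1 : ℕ)) hcon
          simp [ev, od] at this <;> omega)
        ((pawnAdj_iff _ _).2 (by simp [ev, od] <;> omega))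
    have hle2 := steps_to_le (fun i => (B0 S i).card) hstep i j hij
    have h1 := (hcardle i).2
    have h2 := (hcardle j).2
    show m - (B0 S i).card ≤ m - (B0 S j).card
    omega
  · -- S = pat a c
    ext p
    obtain ⟨k, i, h4 | h4 | h4 | h4⟩ := cases_cell p <;> subst h4
    · rw [pat_mem_ee]
      simp only
      have : (ev k, ev i) ∈ S ↔ k ∈ W0 S i := by simp [W0]
      rw [this]
      conv_lhs => rw [(hWeq i).1]
      simp
    · rw [pat_mem_eo]
      simp only
      have : (ev k, od i) ∈ S ↔ k ∈ B1 S i := by simp [B1]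
      rw [this]
      conv_lhs => rw [(hBeq i).2]
      simp
    · rw [pat_mem_oe]
      simp only
      have : (od k, ev i) ∈ S ↔ k ∈ B0 S i := by simp [B0]
      rw [this]
      conv_lhs => rw [(hBeq i).1]
      simp
    · rw [pat_mem_oo]
      simp only
      have : (od k, od i) ∈ S ↔ k ∈ W1 S i := by simp [W1]
      rw [this]
      conv_lhs => rw [(hWeq i).2]
      simp

end


lemma sm_diff {n : ℕ} (g : Fin m → Fin n) (hg : StrictMono g) :
    ∀ i j : Fin m, (i:ℕ) ≤ (j:ℕ) → (g i : ℕ) + ((j:ℕ) - (i:ℕ)) ≤ (g j : ℕ) := by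
  have key : ∀ d, ∀ i j : Fin m, (j:ℕ) = (i:ℕ) + d → (g i : ℕ) + d ≤ (g j : ℕ) := by
    intro d
    induction d with
    | zero =>
      intro i j h
      have : j = i := Fin.ext (by omega)
      rw [this]
      omega
    | succ d ih =>
      intro i j h
      have hlt := j.isLt
      have hmid : ((⟨(i:ℕ) + d, by omega⟩ : Fin m) : ℕ) = (i:ℕ) + d := rfl
      have h1 := ih i ⟨(i:ℕ) + d, by omega⟩ hmid
      have h2 : g ⟨(i:ℕ) + d, by omega⟩ < g j := hg (by rw [Fin.lt_def, hmid]; omega)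
      rw [Fin.lt_def] at h2
      omega
  intro i j h
  have := key ((j:ℕ) - (i:ℕ)) i j (by omega)
  omega

/-- the strictly monotone companion of a monotone map -/
lemma mono_aux (f : Fin m → Fin (m+1)) (hf : Monotone f) :
    StrictMono (fun i : Fin m => (⟨(f i : ℕ) + (i:ℕ), by
      have := (f i).isLt; have := i.isLt; omega⟩ : Fin (2*m))) := by
  intro i j hij
  rw [Fin.lt_def] at hij ⊢
  simp only
  have := hf (le_of_lt hij)
  rw [Fin.le_def] at this
  omega

lemma card_monotone :
    ((Finset.univ : Finset (Fin m → Fin (m+1))).filter (fun f => Monotone f)).card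
      = Nat.choose (2*m) m := by
  classical
  have h := Finset.card_bij
    (s := (Finset.univ : Finset (Fin m → Fin (m+1))).filter (fun f => Monotone f))
    (t := Finset.powersetCard m (Finset.univ : Finset (Fin (2*m))))
    (fun f _ => Finset.univ.image (fun i : Fin m => (⟨(f i : ℕ) + (i:ℕ), by
      have := (f i).isLt; have := i.isLt; omega⟩ : Fin (2*m))))
    ?_ ?_ ?_
  · rw [h, Finset.card_powersetCard, Finset.card_univ, Fintype.card_fin]
  · -- maps to
    intro f hf
    simp only [Finset.mem_filter, Finset.mem_univ, true_and] at hf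
    rw [Finset.mem_powersetCard]
    refine ⟨Finset.subset_univ _, ?_⟩
    rw [Finset.card_image_of_injective _ (mono_aux f hf).injective, Finset.card_univ,
      Fintype.card_fin]
  · -- injective
    intro f hf f' hf' heq
    simp only [Finset.mem_filter, Finset.mem_univ, true_and] at hf hf'
    have hc : (Finset.univ.image (fun i : Fin m => (⟨(f i : ℕ) + (i:ℕ), by
        have := (f i).isLt; have := i.isLt; omega⟩ : Fin (2*m)))).card = m := by
      rw [Finset.card_image_of_injective _ (mono_aux f hf).injective, Finset.card_univ,
        Fintype.card_fin]
    have h1 := Finset.orderEmbOfFin_unique hc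
      (f := fun i : Fin m => (⟨(f i : ℕ) + (i:ℕ), by
        have := (f i).isLt; have := i.isLt; omega⟩ : Fin (2*m)))
      (fun x => Finset.mem_image_of_mem _ (Finset.mem_univ x)) (mono_aux f hf)
    have h2 := Finset.orderEmbOfFin_unique hc
      (f := fun i : Fin m => (⟨(f' i : ℕ) + (i:ℕ), by
        have := (f' i).isLt; have := i.isLt; omega⟩ : Fin (2*m)))
      (fun x => by rw [heq]; exact Finset.mem_image_of_mem _ (Finset.mem_univ x))
      (mono_aux f' hf')
    funext i
    have := congrFun (h1.trans h2.symm) i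
    rw [Fin.ext_iff] at this ⊢
    simp only at this
    omega
  · -- surjective
    intro T hT
    rw [Finset.mem_powersetCard] at hT
    obtain ⟨-, hTc⟩ := hT
    set g := T.orderEmbOfFin hTc with hg
    have hgsm : StrictMono g := g.strictMono
    have hd := sm_diff (fun i => g i) hgsm
    have hlow : ∀ i : Fin m, (i:ℕ) ≤ (g i : ℕ) := by
      intro i
      rcases Nat.eq_zero_or_pos m with hm | hm
      · exact absurd i.isLt (by omega)
      · have := hd ⟨0, hm⟩ i (by simp)
        simp at this
        omega
    have hupp : ∀ i : Fin m, (g i : ℕ) - (i:ℕ) ≤ m := by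
      intro i
      rcases Nat.eq_zero_or_pos m with hm | hm
      · exact absurd i.isLt (by omega)
      · have h1 := hd i ⟨m-1, by omega⟩ (by simp; omega)
        have h2 := (g ⟨m-1, by omega⟩).isLt
        have h3 := i.isLt
        simp at h1
        omega
    refine ⟨fun i => ⟨(g i : ℕ) - (i:ℕ), by have := hupp i; omega⟩, ?_, ?_⟩
    · simp only [Finset.mem_filter, Finset.mem_univ, true_and]
      intro i j hij
      rw [Fin.le_def] at hij ⊢
      show (g i : ℕ) - (i:ℕ) ≤ (g j : ℕ) - (j:ℕ)
      have h1 := hd i j hij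
      have h2 := hlow i
      omega
    · have hval : ∀ i : Fin m, ((⟨((⟨(g i : ℕ) - (i:ℕ), by have := hupp i; omega⟩ : Fin (m+1)) : ℕ) + (i:ℕ), by
          have := hupp i; have := i.isLt; omega⟩ : Fin (2*m))) = g i := by
        intro i
        rw [Fin.ext_iff]
        simp only
        have := hlow i
        omega
      ext x
      simp only [Finset.mem_image, Finset.mem_univ, true_and]
      constructor
      · rintro ⟨i, rfl⟩
        rw [hval i]
        exact Finset.orderEmbOfFin_mem T hTc i
      · intro hx
        have : x ∈ Set.range g := by rw [Finset.range_orderEmbOfFin T hTc]; exact hx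
        obtain ⟨i, hi⟩ := this
        exact ⟨i, by rw [hval i, hi]⟩

lemma card_antitone :
    ((Finset.univ : Finset (Fin m → Fin (m+1))).filter (fun f => Antitone f)).card
      = Nat.choose (2*m) m := by
  classical
  rw [← card_monotone]
  apply Finset.card_nbij' (i := fun f => f ∘ Fin.rev) (j := fun f => f ∘ Fin.rev)
  · intro f hf
    simp only [Finset.mem_coe, Finset.mem_filter, Finset.mem_univ, true_and] at hf ⊢
    intro i j hij
    exact hf (Fin.rev_le_rev.2 hij)
  · intro f hf
    simp only [Finset.mem_coe, Finset.mem_filter, Finset.mem_univ, true_and] at hf ⊢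
    intro i j hij
    exact hf (Fin.rev_le_rev.2 hij)
  · intro f _
    funext i
    simp [Fin.rev_rev]
  · intro f _
    funext i
    simp [Fin.rev_rev]


end Pawn4

theorem stmt4 (m : ℕ) (hm : 1 ≤ m) :
    ((Finset.univ : Finset (Fin (2 * m) × Fin (2 * m))).powerset.filter
        (fun S => S.card = 2 * m ^ 2 ∧ Nonatt S)).card = (Nat.choose (2 * m) m) ^ 2 := by
  classical
  rw [Finset.powerset_univ]
  have h := Finset.card_bij
    (s := ((Finset.univ.filter (fun f : Fin m → Fin (m+1) => Antitone f)) ×ˢ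
           (Finset.univ.filter (fun f : Fin m → Fin (m+1) => Monotone f))))
    (t := Finset.univ.filter
      (fun S : Finset (Fin (2*m) × Fin (2*m)) => S.card = 2 * m ^ 2 ∧ Nonatt S))
    (fun p _ => Pawn4.pat p.1 p.2) ?_ ?_ ?_
  · rw [← h, Finset.card_product, Pawn4.card_antitone, Pawn4.card_monotone, sq]
  · intro p hp
    rw [Finset.mem_product] at hp
    obtain ⟨hp1, hp2⟩ := hp
    simp only [Finset.mem_filter, Finset.mem_univ, true_and] at hp1 hp2 ⊢
    exact ⟨Pawn4.pat_card p.1 p.2, Pawn4.pat_nonatt p.1 p.2 hp1 hp2⟩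
  · intro p hp q hq heq
    obtain ⟨h1, h2⟩ := Pawn4.param_eq_of_pat_eq p.1 p.2 q.1 q.2 heq
    exact Prod.ext h1 h2
  · intro S hSf
    simp only [Finset.mem_filter, Finset.mem_univ, true_and] at hSf
    obtain ⟨hc, hn⟩ := hSf
    obtain ⟨a, c, ha, hcm, hpat⟩ := Pawn4.exists_pat S hn hc
    refine ⟨(a, c), ?_, hpat.symm⟩
    rw [Finset.mem_product]
    simp only [Finset.mem_filter, Finset.mem_univ, true_and]
    exact ⟨ha, hcm⟩
end

section
/- For every m, n ≥ 1, the number of sets of 2mn cells in a 2n×2m board with no two cells diagonally adjacent is exactly (binomial(m+n, n))². -/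
lemma pawnAdj_iff {a b : ℕ} (p q : Fin a × Fin b) :
    PawnAdj p q ↔ (p.1.val = q.1.val + 1 ∨ q.1.val = p.1.val + 1) ∧
      (p.2.val = q.2.val + 1 ∨ q.2.val = p.2.val + 1) := by
  unfold PawnAdj
  rw [abs_eq (by norm_num : (0:ℤ) ≤ 1), abs_eq (by norm_num : (0:ℤ) ≤ 1)]
  omega

lemma nonatt_pair {a b : ℕ} {S : Finset (Fin a × Fin b)} (hS : Nonatt S)
    {p q : Fin a × Fin b} (hp : p ∈ S) (hq : q ∈ S) (hr : q.1.val = p.1.val + 1)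
    (hc : q.2.val = p.2.val + 1 ∨ p.2.val = q.2.val + 1) : False := by
  have hne : p ≠ q := by intro e; rw [e] at hr; omega
  exact hS p hp q hq hne ((pawnAdj_iff p q).mpr ⟨Or.inr hr, by omega⟩)

def phiMem (m n : ℕ) (K L : Fin n → Fin (m+1)) (p : Fin (2*n) × Fin (2*m)) : Prop :=
  (p.1.val % 2 = p.2.val % 2 →
    (p.2.val / 2 < (K ⟨p.1.val / 2, by have := p.1.isLt; omega⟩ : ℕ) ↔ p.1.val % 2 = 0)) ∧
  (p.1.val % 2 ≠ p.2.val % 2 →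
    (p.2.val / 2 < (L ⟨p.1.val / 2, by have := p.1.isLt; omega⟩ : ℕ) ↔ p.1.val % 2 = 1))

instance {m n : ℕ} (K L : Fin n → Fin (m+1)) (p : Fin (2*n) × Fin (2*m)) :
    Decidable (phiMem m n K L p) := by unfold phiMem; infer_instance

def phi (m n : ℕ) (K L : Fin n → Fin (m+1)) : Finset (Fin (2*n) × Fin (2*m)) :=
  Finset.univ.filter (phiMem m n K L)

lemma mem_phi {m n : ℕ} (K L : Fin n → Fin (m+1)) (p : Fin (2*n) × Fin (2*m)) :
    p ∈ phi m n K L ↔ phiMem m n K L p := by simp [phi]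

lemma phiMem_iff {m n : ℕ} (K L : Fin n → Fin (m+1)) (p : Fin (2*n) × Fin (2*m)) :
    phiMem m n K L p ↔ ∀ i : Fin n, (i : ℕ) = p.1.val / 2 →
      ((p.1.val % 2 = p.2.val % 2 → (p.2.val / 2 < (K i : ℕ) ↔ p.1.val % 2 = 0)) ∧
       (p.1.val % 2 ≠ p.2.val % 2 → (p.2.val / 2 < (L i : ℕ) ↔ p.1.val % 2 = 1))) := by
  constructor
  · intro h i hi
    have : i = ⟨p.1.val / 2, by have := p.1.isLt; omega⟩ := Fin.ext hi
    rw [this]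
    exact h
  · intro h
    exact h _ rfl

def cell (m n : ℕ) (i : Fin n) (j : Fin m) (a b : ℕ) (ha : a ≤ 1) (hb : b ≤ 1) :
    Fin (2*n) × Fin (2*m) :=
  (⟨2*(i:ℕ)+a, by have := i.isLt; omega⟩, ⟨2*(j:ℕ)+b, by have := j.isLt; omega⟩)

@[simp] lemma cell_fst {m n : ℕ} (i : Fin n) (j : Fin m) (a b : ℕ) (ha : a ≤ 1) (hb : b ≤ 1) :
    ((cell m n i j a b ha hb).1 : ℕ) = 2*(i:ℕ)+a := rfl

@[simp] lemma cell_snd {m n : ℕ} (i : Fin n) (j : Fin m) (a b : ℕ) (ha : a ≤ 1) (hb : b ≤ 1) :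
    ((cell m n i j a b ha hb).2 : ℕ) = 2*(j:ℕ)+b := rfl

lemma mem_phi_cellF {m n : ℕ} (K L : Fin n → Fin (m+1)) (i : Fin n) (j : Fin m) (a b : ℕ)
    (ha : a ≤ 1) (hb : b ≤ 1) :
    cell m n i j a b ha hb ∈ phi m n K L ↔
    ((a = b → ((j : ℕ) < (K i : ℕ) ↔ a = 0)) ∧ (a ≠ b → ((j : ℕ) < (L i : ℕ) ↔ a = 1))) := by
  rw [mem_phi, phiMem_iff]
  constructor
  · intro h
    obtain ⟨h1, h2⟩ := h i (by simp only [cell_fst]; omega)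
    simp only [cell_fst, cell_snd] at h1 h2
    omega
  · intro h i' hi'
    simp only [cell_fst, cell_snd] at hi' ⊢
    have : i' = i := Fin.ext (by omega)
    subst this
    omega

lemma mem_phi_cell {m n : ℕ} (K L : Fin n → Fin (m+1)) (i : Fin n) (j a b : ℕ)
    (hj : j < m) (ha : a ≤ 1) (hb : b ≤ 1) :
    ((⟨2*(i:ℕ)+a, by have := i.isLt; omega⟩, ⟨2*j+b, by omega⟩) : Fin (2*n) × Fin (2*m))
      ∈ phi m n K L ↔
    ((a = b → (j < (K i : ℕ) ↔ a = 0)) ∧ (a ≠ b → (j < (L i : ℕ) ↔ a = 1))) := by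
  rw [mem_phi, phiMem_iff]
  dsimp only
  constructor
  · intro h
    obtain ⟨h1, h2⟩ := h i (by omega)
    omega
  · intro h i' hi'
    have : i' = i := Fin.ext (by omega)
    subst this
    omega

lemma nonatt_phi {m n : ℕ} (K L : Fin n → Fin (m+1)) (hK : Antitone K) (hL : Monotone L) :
    Nonatt (phi m n K L) := by
  have aux : ∀ p q : Fin (2*n) × Fin (2*m), p ∈ phi m n K L → q ∈ phi m n K L →
      q.1.val = p.1.val + 1 →
      (q.2.val = p.2.val + 1 ∨ p.2.val = q.2.val + 1) → False := by
    intro p q hp hq hr hc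
    obtain ⟨i, hi⟩ : ∃ i : Fin n, (i : ℕ) = p.1.val / 2 :=
      ⟨⟨_, by have := p.1.isLt; omega⟩, rfl⟩
    obtain ⟨i', hi'⟩ : ∃ i' : Fin n, (i' : ℕ) = q.1.val / 2 :=
      ⟨⟨_, by have := q.1.isLt; omega⟩, rfl⟩
    rw [mem_phi, phiMem_iff] at hp hq
    obtain ⟨hp1, hp2⟩ := hp i hi
    obtain ⟨hq1, hq2⟩ := hq i' hi'
    have hii' : i ≤ i' := by rw [Fin.le_def]; omega
    have hKle := Fin.le_def.mp (hK hii')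
    have hLle := Fin.le_def.mp (hL hii')
    have hKeq : (i : ℕ) = (i' : ℕ) → (K i : ℕ) = (K i' : ℕ) := fun h => by rw [Fin.ext h]
    have hLeq : (i : ℕ) = (i' : ℕ) → (L i : ℕ) = (L i' : ℕ) := fun h => by rw [Fin.ext h]
    omega
  intro p hp q hq hne hadj
  rw [pawnAdj_iff] at hadj
  obtain ⟨h1 | h1, h2⟩ := hadj
  · exact aux q p hq hp h1 (by omega)
  · exact aux p q hp hq h1 (by omega)

lemma phi_inj {m n : ℕ} (K L K' L' : Fin n → Fin (m+1))
    (h : phi m n K L = phi m n K' L') : K = K' ∧ L = L' := by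
  constructor
  · funext i
    by_contra hne
    have hv : (K i : ℕ) ≠ (K' i : ℕ) := fun hh => hne (Fin.ext hh)
    have hb1 := (K i).isLt
    have hb2 := (K' i).isLt
    set j := min (K i : ℕ) (K' i : ℕ) with hj
    have hjm : j < m := by omega
    have e1 := mem_phi_cell K L i j 0 0 hjm (by omega) (by omega)
    have e2 := mem_phi_cell K' L' i j 0 0 hjm (by omega) (by omega)
    rw [h] at e1
    rw [e2] at e1
    omega
  · funext i
    by_contra hne
    have hv : (L i : ℕ) ≠ (L' i : ℕ) := fun hh => hne (Fin.ext hh)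
    have hb1 := (L i).isLt
    have hb2 := (L' i).isLt
    set j := min (L i : ℕ) (L' i : ℕ) with hj
    have hjm : j < m := by omega
    have e1 := mem_phi_cell K L i j 0 1 hjm (by omega) (by omega)
    have e2 := mem_phi_cell K' L' i j 0 1 hjm (by omega) (by omega)
    rw [h] at e1
    rw [e2] at e1
    omega

def abit {m n : ℕ} (K L : Fin n → Fin (m+1)) (x : Fin n × Fin m × Bool) : ℕ :=
  if x.2.2 then (if (x.2.1 : ℕ) < (K x.1 : ℕ) then 0 else 1)
  else (if (x.2.1 : ℕ) < (L x.1 : ℕ) then 1 else 0)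

def bbit {m n : ℕ} (K L : Fin n → Fin (m+1)) (x : Fin n × Fin m × Bool) : ℕ :=
  if x.2.2 then abit K L x else 1 - abit K L x

lemma abit_le {m n : ℕ} (K L : Fin n → Fin (m+1)) (x : Fin n × Fin m × Bool) :
    abit K L x ≤ 1 := by unfold abit; split <;> split <;> omega

lemma bbit_le {m n : ℕ} (K L : Fin n → Fin (m+1)) (x : Fin n × Fin m × Bool) :
    bbit K L x ≤ 1 := by have := abit_le K L x; unfold bbit; split <;> omega

def psi {m n : ℕ} (K L : Fin n → Fin (m+1)) (x : Fin n × Fin m × Bool) :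
    Fin (2*n) × Fin (2*m) :=
  (⟨2*(x.1 : ℕ) + abit K L x, by have := x.1.isLt; have := abit_le K L x; omega⟩,
   ⟨2*(x.2.1 : ℕ) + bbit K L x, by have := x.2.1.isLt; have := bbit_le K L x; omega⟩)

def cls (m n : ℕ) (p : Fin (2*n) × Fin (2*m)) : Fin n × Fin m × Bool :=
  (⟨p.1.val / 2, by have := p.1.isLt; omega⟩, ⟨p.2.val / 2, by have := p.2.isLt; omega⟩,
   decide (p.1.val % 2 = p.2.val % 2))

lemma cls_psi {m n : ℕ} (K L : Fin n → Fin (m+1)) (x : Fin n × Fin m × Bool) :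
    cls m n (psi K L x) = x := by
  have ha := abit_le K L x
  have hb := bbit_le K L x
  obtain ⟨i, j, cl⟩ := x
  unfold cls psi
  refine Prod.ext (Fin.ext ?_) (Prod.ext (Fin.ext ?_) ?_)
  · simp only; omega
  · simp only; omega
  · simp only
    cases cl with
    | true =>
        simp only [decide_eq_true_eq]
        have hb' : bbit K L (i, j, true) = abit K L (i, j, true) := by simp [bbit]
        omega
    | false =>
        simp only [decide_eq_false_iff_not]
        have hb' : bbit K L (i, j, false) = 1 - abit K L (i, j, false) := by simp [bbit]
        omega

lemma abit_true {m n : ℕ} (K L : Fin n → Fin (m+1)) (i : Fin n) (j : Fin m) :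
    (abit K L (i, j, true) = 0 ↔ (j : ℕ) < (K i : ℕ)) := by
  simp only [abit]; split <;> simp_all

lemma abit_false {m n : ℕ} (K L : Fin n → Fin (m+1)) (i : Fin n) (j : Fin m) :
    (abit K L (i, j, false) = 1 ↔ (j : ℕ) < (L i : ℕ)) := by
  simp only [abit]; split <;> simp_all

lemma psi_mem {m n : ℕ} (K L : Fin n → Fin (m+1)) (x : Fin n × Fin m × Bool) :
    psi K L x ∈ phi m n K L := by
  rw [mem_phi]
  obtain ⟨i, j, cl⟩ := x
  have ha := abit_le K L (i, j, cl)
  cases cl with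
  | true =>
    have hb : bbit K L (i, j, true) = abit K L (i, j, true) := by simp [bbit]
    have hiff := abit_true K L i j
    unfold phiMem psi
    have e1 : (2*(i:ℕ) + abit K L (i, j, true)) / 2 = (i:ℕ) := by omega
    simp only [e1, Fin.eta]
    omega
  | false =>
    have hb : bbit K L (i, j, false) = 1 - abit K L (i, j, false) := by simp [bbit]
    have hiff := abit_false K L i j
    unfold phiMem psi
    have e1 : (2*(i:ℕ) + abit K L (i, j, false)) / 2 = (i:ℕ) := by omega
    simp only [e1, Fin.eta]
    omega

lemma phi_inj_cls {m n : ℕ} (K L : Fin n → Fin (m+1)) {p q : Fin (2*n) × Fin (2*m)}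
    (hp : p ∈ phi m n K L) (hq : q ∈ phi m n K L) (h : cls m n p = cls m n q) : p = q := by
  rw [mem_phi] at hp hq
  unfold cls at h
  rw [Prod.ext_iff, Prod.ext_iff] at h
  obtain ⟨h1, h2, h3⟩ := h
  rw [Fin.mk.injEq] at h1 h2
  simp only [decide_eq_decide] at h3
  obtain ⟨hp1, hp2⟩ := hp
  obtain ⟨hq1, hq2⟩ := hq
  have hfk : (⟨p.1.val / 2, by have := p.1.isLt; omega⟩ : Fin n)
      = ⟨q.1.val / 2, by have := q.1.isLt; omega⟩ := Fin.ext h1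
  rw [hfk] at hp1 hp2
  exact Prod.ext (Fin.ext (by omega)) (Fin.ext (by omega))

lemma card_phi {m n : ℕ} (K L : Fin n → Fin (m+1)) : (phi m n K L).card = 2 * m * n := by
  rw [Finset.card_eq_sum_card_fiberwise
    (f := cls m n) (t := Finset.univ) (fun x _ => Finset.mem_univ _)]
  have hfib : ∀ x : Fin n × Fin m × Bool,
      ((phi m n K L).filter (fun p => cls m n p = x)).card = 1 := by
    intro x
    rw [Finset.card_eq_one]
    refine ⟨psi K L x, ?_⟩
    ext q
    simp only [Finset.mem_filter, Finset.mem_singleton]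
    constructor
    · rintro ⟨hq, hc⟩
      exact phi_inj_cls K L hq (psi_mem K L x) (by rw [hc, cls_psi])
    · rintro rfl
      exact ⟨psi_mem K L x, cls_psi K L x⟩
  simp only [hfib]
  simp [Fintype.card_prod]
  ring

def quad (m n : ℕ) (S : Finset (Fin (2*n) × Fin (2*m))) (a b : ℕ) (ha : a ≤ 1) (hb : b ≤ 1)
    (i : Fin n) : Finset (Fin m) :=
  Finset.univ.filter (fun j => cell m n i j a b ha hb ∈ S)

lemma mem_quad {m n : ℕ} (S : Finset (Fin (2*n) × Fin (2*m))) (a b : ℕ) (ha : a ≤ 1)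
    (hb : b ≤ 1) (i : Fin n) (j : Fin m) :
    j ∈ quad m n S a b ha hb i ↔ cell m n i j a b ha hb ∈ S := by simp [quad]

lemma quad_card_le {m n : ℕ} (S : Finset (Fin (2*n) × Fin (2*m))) (a b : ℕ) (ha : a ≤ 1)
    (hb : b ≤ 1) (i : Fin n) : (quad m n S a b ha hb i).card ≤ m := by
  have := Finset.card_le_univ (quad m n S a b ha hb i)
  simpa using this

lemma force_eq {n : ℕ} (f : Fin n → ℕ) (c : ℕ) (hle : ∀ i, f i ≤ c)
    (hsum : ∑ i, f i = n * c) : ∀ i, f i = c := by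
  by_contra h
  push_neg at h
  obtain ⟨i, hi⟩ := h
  have hlt : f i < c := lt_of_le_of_ne (hle i) hi
  have : ∑ j, f j < ∑ _j : Fin n, c :=
    Finset.sum_lt_sum (fun j _ => hle j) ⟨i, Finset.mem_univ i, hlt⟩
  simp [Finset.sum_const, Finset.card_univ] at this
  omega

lemma downclosed_mem_iff {m : ℕ} (T : Finset (Fin m))
    (step : ∀ (j : ℕ) (h : j+1 < m), (⟨j+1, h⟩ : Fin m) ∈ T → (⟨j, by omega⟩ : Fin m) ∈ T) :
    ∀ j : Fin m, j ∈ T ↔ (j : ℕ) < T.card := by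
  have down : ∀ (d a : ℕ) (h : a + d < m),
      (⟨a+d, h⟩ : Fin m) ∈ T → (⟨a, by omega⟩ : Fin m) ∈ T := by
    intro d
    induction d with
    | zero => intro a h hm; exact hm
    | succ d ih => intro a h hm; exact ih a (by omega) (step (a+d) h hm)
  have down' : ∀ a b : Fin m, a ≤ b → b ∈ T → a ∈ T := by
    intro a b hab hb
    rw [Fin.le_def] at hab
    have hlt : (a:ℕ) + ((b:ℕ) - (a:ℕ)) < m := by have := b.isLt; omega
    have h1 : (⟨(a:ℕ) + ((b:ℕ) - (a:ℕ)), hlt⟩ : Fin m) = b := Fin.ext (by simp; omega)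
    have := down ((b:ℕ) - (a:ℕ)) (a:ℕ) hlt (by rw [h1]; exact hb)
    simpa using this
  intro j
  constructor
  · intro hj
    have hsub : Finset.Iic j ⊆ T := by
      intro t ht
      rw [Finset.mem_Iic] at ht
      exact down' t j ht hj
    have := Finset.card_le_card hsub
    rw [Fin.card_Iic] at this
    omega
  · intro hj
    by_contra hnot
    have hsub : T ⊆ Finset.Iio j := by
      intro t ht
      rw [Finset.mem_Iio]
      by_contra hlt
      push_neg at hlt
      exact hnot (down' j t hlt ht)
    have := Finset.card_le_card hsub
    rw [Fin.card_Iio] at this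
    omega

lemma monotone_of_step {n M : ℕ} (f : Fin n → Fin M)
    (h : ∀ (i : ℕ) (hi : i+1 < n), f ⟨i, by omega⟩ ≤ f ⟨i+1, hi⟩) : Monotone f := by
  have key : ∀ (d a : ℕ) (hd : a + d < n), f ⟨a, by omega⟩ ≤ f ⟨a+d, hd⟩ := by
    intro d
    induction d with
    | zero => intro a hd; exact le_of_eq (congrArg f (Fin.ext rfl))
    | succ d ih => intro a hd; exact le_trans (ih a (by omega)) (h (a+d) hd)
  intro a b hab
  rw [Fin.le_def] at hab
  have hlt : (a:ℕ) + ((b:ℕ) - (a:ℕ)) < n := by have := b.isLt; omega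
  have := key ((b:ℕ) - (a:ℕ)) (a:ℕ) hlt
  have e1 : (⟨(a:ℕ), by omega⟩ : Fin n) = a := Fin.ext rfl
  have e2 : (⟨(a:ℕ) + ((b:ℕ) - (a:ℕ)), hlt⟩ : Fin n) = b := Fin.ext (by simp; omega)
  rwa [e1, e2] at this

lemma antitone_of_step {n M : ℕ} (f : Fin n → Fin M)
    (h : ∀ (i : ℕ) (hi : i+1 < n), f ⟨i+1, hi⟩ ≤ f ⟨i, by omega⟩) : Antitone f := by
  have key : ∀ (d a : ℕ) (hd : a + d < n), f ⟨a+d, hd⟩ ≤ f ⟨a, by omega⟩ := by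
    intro d
    induction d with
    | zero => intro a hd; exact le_of_eq (congrArg f (Fin.ext rfl))
    | succ d ih => intro a hd; exact le_trans (h (a+d) hd) (ih a (by omega))
  intro a b hab
  rw [Fin.le_def] at hab
  have hlt : (a:ℕ) + ((b:ℕ) - (a:ℕ)) < n := by have := b.isLt; omega
  have := key ((b:ℕ) - (a:ℕ)) (a:ℕ) hlt
  have e1 : (⟨(a:ℕ), by omega⟩ : Fin n) = a := Fin.ext rfl
  have e2 : (⟨(a:ℕ) + ((b:ℕ) - (a:ℕ)), hlt⟩ : Fin n) = b := Fin.ext (by simp; omega)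
  rwa [e1, e2] at this

lemma fiber_card {m n : ℕ} (S : Finset (Fin (2*n) × Fin (2*m))) (i : Fin n) (a b : ℕ)
    (ha : a ≤ 1) (hb : b ≤ 1) :
    (S.filter (fun p => p.1.val/2 = (i:ℕ) ∧ p.1.val % 2 = a ∧ p.2.val % 2 = b)).card
      = (quad m n S a b ha hb i).card := by
  classical
  have key : ∀ p ∈ S.filter (fun p => p.1.val/2 = (i:ℕ) ∧ p.1.val % 2 = a ∧ p.2.val % 2 = b),
      cell m n i ⟨p.2.val/2, by have := p.2.isLt; omega⟩ a b ha hb = p := by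
    intro p hp
    rw [Finset.mem_filter] at hp
    obtain ⟨-, h1, h2, h3⟩ := hp
    exact Prod.ext (Fin.ext (by simp [cell]; omega)) (Fin.ext (by simp [cell]; omega))
  refine Finset.card_bij' (fun p _ => (⟨p.2.val/2, by have := p.2.isLt; omega⟩ : Fin m))
    (fun j _ => cell m n i j a b ha hb) ?_ ?_ ?_ ?_
  · -- maps into t
    intro p hp
    rw [mem_quad, key p hp]
    exact (Finset.mem_filter.mp hp).1
  · -- maps into s
    intro j hj
    rw [mem_quad] at hj
    rw [Finset.mem_filter]
    refine ⟨hj, by simp; omega, by simp; omega, by simp; omega⟩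
  · -- left inverse
    intro p hp
    exact key p hp
  · -- right inverse
    intro j hj
    exact Fin.ext (by simp; omega)

lemma card_S_decomp {m n : ℕ} (S : Finset (Fin (2*n) × Fin (2*m))) :
    S.card = ∑ i : Fin n,
      (((quad m n S 0 0 (by omega) (by omega) i).card
        + (quad m n S 1 1 (by omega) (by omega) i).card)
      + ((quad m n S 0 1 (by omega) (by omega) i).card
        + (quad m n S 1 0 (by omega) (by omega) i).card)) := by
  classical
  have h0 := Finset.card_eq_sum_card_fiberwise
    (s := S) (t := (Finset.univ : Finset (Fin n × Fin 2 × Fin 2)))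
    (f := fun p => ((⟨p.1.val/2, by have := p.1.isLt; omega⟩ : Fin n),
      (⟨p.1.val % 2, by omega⟩ : Fin 2), (⟨p.2.val % 2, by omega⟩ : Fin 2)))
    (fun x _ => Finset.mem_univ _)
  rw [h0]
  rw [Fintype.sum_prod_type]
  apply Finset.sum_congr rfl
  intro i _
  rw [Fintype.sum_prod_type]
  rw [Fin.sum_univ_two]
  rw [Fin.sum_univ_two, Fin.sum_univ_two]
  have conv : ∀ (a b : Fin 2),
      (S.filter (fun p => ((⟨p.1.val/2, by have := p.1.isLt; omega⟩ : Fin n),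
        (⟨p.1.val % 2, by omega⟩ : Fin 2), (⟨p.2.val % 2, by omega⟩ : Fin 2)) = (i, a, b))).card
      = (S.filter (fun p =>
          p.1.val/2 = (i:ℕ) ∧ p.1.val % 2 = (a:ℕ) ∧ p.2.val % 2 = (b:ℕ))).card := by
    intro a b
    congr 1
    apply Finset.filter_congr
    intro p _
    simp only [Prod.mk.injEq, Fin.ext_iff]
  rw [conv 0 0, conv 0 1, conv 1 0, conv 1 1]
  have e00 := fiber_card S i 0 0 (by omega) (by omega)
  have e01 := fiber_card S i 0 1 (by omega) (by omega)
  have e10 := fiber_card S i 1 0 (by omega) (by omega)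
  have e11 := fiber_card S i 1 1 (by omega) (by omega)
  simp only [Fin.val_zero, Fin.val_one] at *
  omega

lemma strictmono_gap {N n : ℕ} (u : Fin n → Fin N) (hu : StrictMono u) :
    ∀ (d a : ℕ) (h : a + d < n), (u ⟨a, by omega⟩ : ℕ) + d ≤ (u ⟨a + d, h⟩ : ℕ) := by
  intro d
  induction d with
  | zero => intro a h; simp
  | succ d ih =>
    intro a h
    have h1 := ih a (by omega)
    have h2 : u ⟨a + d, by omega⟩ < u ⟨a + (d+1), h⟩ := hu (Fin.mk_lt_mk.mpr (by omega))
    rw [Fin.lt_def] at h2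
    omega

lemma count_monotone (m n : ℕ) :
    (Finset.univ.filter (fun f : Fin n → Fin (m+1) => Monotone f)).card
      = (m + n).choose n := by
  classical
  have h2 : ((Finset.univ : Finset (Fin (m+n))).powersetCard n).card = (m+n).choose n := by
    rw [Finset.card_powersetCard]; simp
  rw [← h2]
  have sm : ∀ f : Fin n → Fin (m+1), Monotone f → StrictMono (fun i : Fin n =>
      (⟨(f i : ℕ) + (i : ℕ), by have := (f i).isLt; have := i.isLt; omega⟩ : Fin (m+n))) := by
    intro f hf a b hab
    have := hf (le_of_lt hab)
    rw [Fin.le_def] at this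
    rw [Fin.lt_def] at hab ⊢
    simp only
    omega
  apply Finset.card_bij
    (fun f _ => Finset.image (fun i : Fin n =>
      (⟨(f i : ℕ) + (i : ℕ), by have := (f i).isLt; have := i.isLt; omega⟩ : Fin (m+n)))
      Finset.univ)
  · intro f hf
    rw [Finset.mem_filter] at hf
    rw [Finset.mem_powersetCard]
    refine ⟨Finset.subset_univ _, ?_⟩
    rw [Finset.card_image_of_injective _ (sm f hf.2).injective, Finset.card_univ,
      Fintype.card_fin]
  · intro f hf g hg himg
    rw [Finset.mem_filter] at hf hg
    have hcardf : (Finset.image (fun i : Fin n =>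
        (⟨(f i : ℕ) + (i : ℕ), by have := (f i).isLt; have := i.isLt; omega⟩ : Fin (m+n)))
        Finset.univ).card = n := by
      rw [Finset.card_image_of_injective _ (sm f hf.2).injective, Finset.card_univ,
        Fintype.card_fin]
    have huf := Finset.orderEmbOfFin_unique hcardf
      (f := fun i : Fin n =>
        (⟨(f i : ℕ) + (i : ℕ), by have := (f i).isLt; have := i.isLt; omega⟩ : Fin (m+n)))
      (fun x => Finset.mem_image_of_mem _ (Finset.mem_univ x)) (sm f hf.2)
    have hug := Finset.orderEmbOfFin_unique hcardf
      (f := fun i : Fin n =>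
        (⟨(g i : ℕ) + (i : ℕ), by have := (g i).isLt; have := i.isLt; omega⟩ : Fin (m+n)))
      (fun x => by rw [himg]; exact Finset.mem_image_of_mem _ (Finset.mem_univ x)) (sm g hg.2)
    funext i
    have heq := (congrFun huf i).trans (congrFun hug i).symm
    have hv := congrArg Fin.val heq
    simp only at hv
    exact Fin.ext (by omega)
  · intro s hs
    rw [Finset.mem_powersetCard] at hs
    obtain ⟨-, hcard⟩ := hs
    set u := s.orderEmbOfFin hcard with hu
    have hgap := strictmono_gap (⇑u) (u.strictMono)
    have hlow : ∀ i : Fin n, (i : ℕ) ≤ (u i : ℕ) := by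
      intro i
      have h := hgap (i : ℕ) 0 (by have := i.isLt; omega)
      have e : (⟨0 + (i : ℕ), by have := i.isLt; omega⟩ : Fin n) = i := Fin.ext (by simp)
      rw [e] at h
      omega
    have hhigh : ∀ i : Fin n, (u i : ℕ) ≤ m + (i : ℕ) := by
      intro i
      have hn : 0 < n := i.pos
      have h := hgap (n - 1 - (i : ℕ)) (i : ℕ) (by have := i.isLt; omega)
      have e : (⟨(i : ℕ), by have := i.isLt; omega⟩ : Fin n) = i := Fin.ext rfl
      rw [e] at h
      have hb := (u ⟨(i : ℕ) + (n - 1 - (i : ℕ)), by have := i.isLt; omega⟩).isLt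
      have hi := i.isLt
      omega
    refine ⟨fun i => ⟨(u i : ℕ) - (i : ℕ), by have := hhigh i; omega⟩, ?_, ?_⟩
    · rw [Finset.mem_filter]
      refine ⟨Finset.mem_univ _, ?_⟩
      intro a b hab
      rw [Fin.le_def]
      simp only
      have h := hgap ((b : ℕ) - (a : ℕ)) (a : ℕ) (by have := b.isLt; rw [Fin.le_def] at hab; omega)
      have e1 : (⟨(a : ℕ), by have := a.isLt; omega⟩ : Fin n) = a := Fin.ext rfl
      have e2 : (⟨(a : ℕ) + ((b : ℕ) - (a : ℕ)),
          by have := b.isLt; rw [Fin.le_def] at hab; omega⟩ : Fin n) = b := by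
        apply Fin.ext; rw [Fin.le_def] at hab; simp; omega
      rw [e1, e2] at h
      have := hlow a
      rw [Fin.le_def] at hab
      omega
    · apply Finset.eq_of_subset_of_card_le
      · intro x hx
        rw [Finset.mem_image] at hx
        obtain ⟨i, -, rfl⟩ := hx
        have hxu : (⟨((⟨(u i : ℕ) - (i : ℕ), by have := hhigh i; omega⟩ : Fin (m+1)) : ℕ)
            + (i : ℕ), by have := hhigh i; have := i.isLt; omega⟩ : Fin (m+n)) = u i := by
          apply Fin.ext
          simp only
          have := hlow i
          omega
        rw [hxu]
        exact Finset.orderEmbOfFin_mem s hcard i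
      · rw [hcard]
        have hinj : Function.Injective (fun i : Fin n =>
            (⟨((⟨(u i : ℕ) - (i : ℕ), by have := hhigh i; omega⟩ : Fin (m+1)) : ℕ)
              + (i : ℕ), by have := hhigh i; have := i.isLt; omega⟩ : Fin (m+n))) := by
          intro a b hab
          have hv := congrArg Fin.val hab
          simp only at hv
          have ha := hlow a
          have hb := hlow b
          apply u.injective
          apply Fin.ext
          omega
        rw [Finset.card_image_of_injective _ hinj, Finset.card_univ, Fintype.card_fin]

lemma count_antitone (m n : ℕ) :
    (Finset.univ.filter (fun f : Fin n → Fin (m+1) => Antitone f)).card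
      = (m + n).choose n := by
  classical
  rw [← count_monotone m n]
  apply Finset.card_bij' (fun f _ => fun i => (f i).rev) (fun g _ => fun i => (g i).rev)
  · intro f _; funext i; exact Fin.rev_rev _
  · intro g _; funext i; exact Fin.rev_rev _
  · intro f hf
    rw [Finset.mem_filter] at hf ⊢
    exact ⟨Finset.mem_univ _, fun a b hab => Fin.rev_le_rev.mpr (hf.2 hab)⟩
  · intro g hg
    rw [Finset.mem_filter] at hg ⊢
    exact ⟨Finset.mem_univ _, fun a b hab => Fin.rev_le_rev.mpr (hg.2 hab)⟩

def Kfun (m n : ℕ) (S : Finset (Fin (2*n) × Fin (2*m))) : Fin n → Fin (m+1) :=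
  fun i => ⟨(quad m n S 0 0 (by omega) (by omega) i).card,
    by have := quad_card_le S 0 0 (by omega) (by omega) i; omega⟩

def Lfun (m n : ℕ) (S : Finset (Fin (2*n) × Fin (2*m))) : Fin n → Fin (m+1) :=
  fun i => ⟨(quad m n S 1 0 (by omega) (by omega) i).card,
    by have := quad_card_le S 1 0 (by omega) (by omega) i; omega⟩

@[simp] lemma Kfun_val {m n : ℕ} (S : Finset (Fin (2*n) × Fin (2*m))) (i : Fin n) :
    (Kfun m n S i : ℕ) = (quad m n S 0 0 (by omega) (by omega) i).card := rfl

@[simp] lemma Lfun_val {m n : ℕ} (S : Finset (Fin (2*n) × Fin (2*m))) (i : Fin n) :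
    (Lfun m n S i : ℕ) = (quad m n S 1 0 (by omega) (by omega) i).card := rfl

lemma phi_surj {m n : ℕ} (S : Finset (Fin (2*n) × Fin (2*m))) (hcard : S.card = 2*m*n)
    (hS : Nonatt S) :
    ∃ K L : Fin n → Fin (m+1), Antitone K ∧ Monotone L ∧ S = phi m n K L := by
  classical
  have hdisjA : ∀ i : Fin n, Disjoint (quad m n S 0 0 (by omega) (by omega) i)
      (quad m n S 1 1 (by omega) (by omega) i) := by
    intro i
    rw [Finset.disjoint_left]
    intro j h0 h1
    rw [mem_quad] at h0 h1
    exact nonatt_pair hS h0 h1 (by simp only [cell_fst, cell_snd] <;> omega)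
      (Or.inl (by simp only [cell_fst, cell_snd] <;> omega))
  have hdisjB : ∀ i : Fin n, Disjoint (quad m n S 0 1 (by omega) (by omega) i)
      (quad m n S 1 0 (by omega) (by omega) i) := by
    intro i
    rw [Finset.disjoint_left]
    intro j h0 h1
    rw [mem_quad] at h0 h1
    exact nonatt_pair hS h0 h1 (by simp only [cell_fst, cell_snd] <;> omega)
      (Or.inr (by simp only [cell_fst, cell_snd] <;> omega))
  have hsum := card_S_decomp S
  have hAle : ∀ i : Fin n, (quad m n S 0 0 (by omega) (by omega) i).card
      + (quad m n S 1 1 (by omega) (by omega) i).card ≤ m := by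
    intro i
    have h1 := Finset.card_union_of_disjoint (hdisjA i)
    have h2 := Finset.card_le_univ ((quad m n S 0 0 (by omega) (by omega) i)
      ∪ (quad m n S 1 1 (by omega) (by omega) i))
    simp only [Finset.card_univ, Fintype.card_fin] at h2
    omega
  have hBle : ∀ i : Fin n, (quad m n S 0 1 (by omega) (by omega) i).card
      + (quad m n S 1 0 (by omega) (by omega) i).card ≤ m := by
    intro i
    have h1 := Finset.card_union_of_disjoint (hdisjB i)
    have h2 := Finset.card_le_univ ((quad m n S 0 1 (by omega) (by omega) i)
      ∪ (quad m n S 1 0 (by omega) (by omega) i))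
    simp only [Finset.card_univ, Fintype.card_fin] at h2
    omega
  have hforce := force_eq (fun i =>
      ((quad m n S 0 0 (by omega) (by omega) i).card
        + (quad m n S 1 1 (by omega) (by omega) i).card)
      + ((quad m n S 0 1 (by omega) (by omega) i).card
        + (quad m n S 1 0 (by omega) (by omega) i).card)) (2*m)
    (fun i => by
      have := hAle i
      have := hBle i
      show ((quad m n S 0 0 (by omega) (by omega) i).card
          + (quad m n S 1 1 (by omega) (by omega) i).card)
        + ((quad m n S 0 1 (by omega) (by omega) i).card
          + (quad m n S 1 0 (by omega) (by omega) i).card) ≤ 2*m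
      omega)
    (by rw [← hsum, hcard]; ring)
  have hA : ∀ i : Fin n, (quad m n S 0 0 (by omega) (by omega) i).card
      + (quad m n S 1 1 (by omega) (by omega) i).card = m := by
    intro i
    have h1 : ((quad m n S 0 0 (by omega) (by omega) i).card
        + (quad m n S 1 1 (by omega) (by omega) i).card)
      + ((quad m n S 0 1 (by omega) (by omega) i).card
        + (quad m n S 1 0 (by omega) (by omega) i).card) = 2*m := hforce i
    have := hAle i
    have := hBle i
    omega
  have hB : ∀ i : Fin n, (quad m n S 0 1 (by omega) (by omega) i).card
      + (quad m n S 1 0 (by omega) (by omega) i).card = m := by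
    intro i
    have h1 : ((quad m n S 0 0 (by omega) (by omega) i).card
        + (quad m n S 1 1 (by omega) (by omega) i).card)
      + ((quad m n S 0 1 (by omega) (by omega) i).card
        + (quad m n S 1 0 (by omega) (by omega) i).card) = 2*m := hforce i
    have := hAle i
    have := hBle i
    omega
  have hunionA : ∀ i : Fin n, (quad m n S 0 0 (by omega) (by omega) i)
      ∪ (quad m n S 1 1 (by omega) (by omega) i) = Finset.univ := by
    intro i
    apply Finset.eq_univ_of_card
    rw [Finset.card_union_of_disjoint (hdisjA i), hA i, Fintype.card_fin]
  have hunionB : ∀ i : Fin n, (quad m n S 0 1 (by omega) (by omega) i)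
      ∪ (quad m n S 1 0 (by omega) (by omega) i) = Finset.univ := by
    intro i
    apply Finset.eq_univ_of_card
    rw [Finset.card_union_of_disjoint (hdisjB i), hB i, Fintype.card_fin]
  have hmemA : ∀ (i : Fin n) (j : Fin m), j ∈ quad m n S 1 1 (by omega) (by omega) i
      ↔ j ∉ quad m n S 0 0 (by omega) (by omega) i := by
    intro i j
    constructor
    · intro h1 h0
      exact (Finset.disjoint_left.mp (hdisjA i)) h0 h1
    · intro h0
      have hj : j ∈ (quad m n S 0 0 (by omega) (by omega) i)
          ∪ (quad m n S 1 1 (by omega) (by omega) i) := by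
        rw [hunionA i]; exact Finset.mem_univ j
      rcases Finset.mem_union.mp hj with h | h
      · exact absurd h h0
      · exact h
  have hmemB : ∀ (i : Fin n) (j : Fin m), j ∈ quad m n S 0 1 (by omega) (by omega) i
      ↔ j ∉ quad m n S 1 0 (by omega) (by omega) i := by
    intro i j
    constructor
    · intro h1 h0
      exact (Finset.disjoint_left.mp (hdisjB i)) h1 h0
    · intro h0
      have hj : j ∈ (quad m n S 0 1 (by omega) (by omega) i)
          ∪ (quad m n S 1 0 (by omega) (by omega) i) := by
        rw [hunionB i]; exact Finset.mem_univ j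
      rcases Finset.mem_union.mp hj with h | h
      · exact h
      · exact absurd h h0
  have hdc00 : ∀ (i : Fin n) (j : Fin m), j ∈ quad m n S 0 0 (by omega) (by omega) i
      ↔ (j : ℕ) < (quad m n S 0 0 (by omega) (by omega) i).card := by
    intro i
    apply downclosed_mem_iff
    intro j' hj' hmem
    by_contra hnot
    have h11 := (hmemA i ⟨j', by omega⟩).mpr hnot
    rw [mem_quad] at hmem h11
    exact nonatt_pair hS hmem h11 (by simp only [cell_fst, cell_snd] <;> omega)
      (Or.inr (by simp only [cell_fst, cell_snd] <;> omega))
  have hdc10 : ∀ (i : Fin n) (j : Fin m), j ∈ quad m n S 1 0 (by omega) (by omega) i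
      ↔ (j : ℕ) < (quad m n S 1 0 (by omega) (by omega) i).card := by
    intro i
    apply downclosed_mem_iff
    intro j' hj' hmem
    by_contra hnot
    have h01 := (hmemB i ⟨j', by omega⟩).mpr hnot
    rw [mem_quad] at hmem h01
    exact nonatt_pair hS h01 hmem (by simp only [cell_fst, cell_snd] <;> omega)
      (Or.inl (by simp only [cell_fst, cell_snd] <;> omega))
  refine ⟨Kfun m n S, Lfun m n S, ?_, ?_, ?_⟩
  · -- Antitone K
    apply antitone_of_step
    intro i hi
    rw [Fin.le_def, Kfun_val, Kfun_val]
    by_contra hlt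
    push_neg at hlt
    have hjm : (quad m n S 0 0 (by omega) (by omega) (⟨i, by omega⟩ : Fin n)).card < m := by
      have := quad_card_le S 0 0 (by omega) (by omega) (⟨i+1, hi⟩ : Fin n)
      omega
    obtain ⟨j, hjv⟩ : ∃ j : Fin m,
        (j : ℕ) = (quad m n S 0 0 (by omega) (by omega) (⟨i, by omega⟩ : Fin n)).card :=
      ⟨⟨_, hjm⟩, rfl⟩
    have h1 : j ∈ quad m n S 0 0 (by omega) (by omega) (⟨i+1, hi⟩ : Fin n) :=
      (hdc00 _ j).mpr (by omega)
    have h0 : j ∉ quad m n S 0 0 (by omega) (by omega) (⟨i, by omega⟩ : Fin n) := by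
      rw [hdc00]; omega
    have h11 := (hmemA (⟨i, by omega⟩ : Fin n) j).mpr h0
    rw [mem_quad] at h1 h11
    exact nonatt_pair hS h11 h1 (by simp only [cell_fst, cell_snd] <;> omega)
      (Or.inr (by simp only [cell_fst, cell_snd] <;> omega))
  · -- Monotone L
    apply monotone_of_step
    intro i hi
    rw [Fin.le_def, Lfun_val, Lfun_val]
    by_contra hlt
    push_neg at hlt
    have hjm : (quad m n S 1 0 (by omega) (by omega) (⟨i+1, hi⟩ : Fin n)).card < m := by
      have := quad_card_le S 1 0 (by omega) (by omega) (⟨i, by omega⟩ : Fin n)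
      omega
    obtain ⟨j, hjv⟩ : ∃ j : Fin m,
        (j : ℕ) = (quad m n S 1 0 (by omega) (by omega) (⟨i+1, hi⟩ : Fin n)).card :=
      ⟨⟨_, hjm⟩, rfl⟩
    have h1 : j ∈ quad m n S 1 0 (by omega) (by omega) (⟨i, by omega⟩ : Fin n) :=
      (hdc10 _ j).mpr (by omega)
    have h0 : j ∉ quad m n S 1 0 (by omega) (by omega) (⟨i+1, hi⟩ : Fin n) := by
      rw [hdc10]; omega
    have h01 := (hmemB (⟨i+1, hi⟩ : Fin n) j).mpr h0
    rw [mem_quad] at h1 h01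
    exact nonatt_pair hS h1 h01 (by simp only [cell_fst, cell_snd] <;> omega)
      (Or.inl (by simp only [cell_fst, cell_snd] <;> omega))
  · -- S = phi
    apply Finset.eq_of_subset_of_card_le
    · intro p hp
      obtain ⟨i, j, a, b, ha, hb, rfl⟩ : ∃ (i : Fin n) (j : Fin m) (a b : ℕ)
          (ha : a ≤ 1) (hb : b ≤ 1), p = cell m n i j a b ha hb := by
        refine ⟨⟨p.1.val/2, by have := p.1.isLt; omega⟩, ⟨p.2.val/2, by have := p.2.isLt; omega⟩,
          p.1.val % 2, p.2.val % 2, by omega, by omega, ?_⟩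
        exact Prod.ext (Fin.ext (by simp only [cell_fst] <;> omega))
          (Fin.ext (by simp only [cell_snd] <;> omega))
      rw [mem_phi_cellF]
      simp only [Kfun_val, Lfun_val]
      rcases (show a = 0 ∨ a = 1 from by omega) with rfl | rfl <;>
        rcases (show b = 0 ∨ b = 1 from by omega) with rfl | rfl
      · have hq : j ∈ quad m n S 0 0 ha hb i := (mem_quad S 0 0 ha hb i j).mpr hp
        have hv := (hdc00 i j).mp hq
        omega
      · have hq : j ∈ quad m n S 0 1 ha hb i := (mem_quad S 0 1 ha hb i j).mpr hp
        have hv : ¬ ((j : ℕ) < (quad m n S 1 0 (by omega) (by omega) i).card) := by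
          rw [← hdc10 i j]
          exact (hmemB i j).mp hq
        omega
      · have hq : j ∈ quad m n S 1 0 ha hb i := (mem_quad S 1 0 ha hb i j).mpr hp
        have hv := (hdc10 i j).mp hq
        omega
      · have hq : j ∈ quad m n S 1 1 ha hb i := (mem_quad S 1 1 ha hb i j).mpr hp
        have hv : ¬ ((j : ℕ) < (quad m n S 0 0 (by omega) (by omega) i).card) := by
          rw [← hdc00 i j]
          intro h00
          exact (Finset.disjoint_left.mp (hdisjA i)) h00 hq
        omega
    · rw [card_phi, hcard]

theorem stmt5 (m n : ℕ) (hm : 1 ≤ m) (hn : 1 ≤ n) :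
    ((Finset.univ : Finset (Fin (2 * n) × Fin (2 * m))).powerset.filter
        (fun S => S.card = 2 * m * n ∧ Nonatt S)).card = (Nat.choose (m + n) n) ^ 2 := by
  classical
  have main : ((Finset.univ : Finset (Fin (2 * n) × Fin (2 * m))).powerset.filter
      (fun S => S.card = 2 * m * n ∧ Nonatt S)).card
      = (Finset.univ.filter (fun KL : (Fin n → Fin (m+1)) × (Fin n → Fin (m+1)) =>
          Antitone KL.1 ∧ Monotone KL.2)).card := by
    symm
    apply Finset.card_bij (fun KL _ => phi m n KL.1 KL.2)
    · intro KL hKL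
      rw [Finset.mem_filter] at hKL
      rw [Finset.mem_filter, Finset.mem_powerset]
      exact ⟨Finset.subset_univ _, card_phi _ _, nonatt_phi _ _ hKL.2.1 hKL.2.2⟩
    · intro KL h1 KL' h2 heq
      obtain ⟨hK, hL⟩ := phi_inj _ _ _ _ heq
      exact Prod.ext hK hL
    · intro S hs
      rw [Finset.mem_filter] at hs
      obtain ⟨-, hc, hna⟩ := hs
      obtain ⟨K, L, hKa, hLm, hSeq⟩ := phi_surj S hc hna
      exact ⟨(K, L), Finset.mem_filter.mpr ⟨Finset.mem_univ _, hKa, hLm⟩, hSeq.symm⟩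
  rw [main]
  have huniv : (Finset.univ : Finset ((Fin n → Fin (m+1)) × (Fin n → Fin (m+1))))
      = Finset.univ ×ˢ Finset.univ := (Finset.univ_product_univ).symm
  rw [huniv, Finset.filter_product, Finset.card_product, count_antitone, count_monotone, sq]
end

section
/- In any maximum nonattacking arrangement of 2m pawns on a 2×2m board, each of the m consecutive 2×2 blocks (columns 2k and 2k+1) contains exactly 2 pawns. -/
theorem stmt8 (m : ℕ) (hm : 1 ≤ m) (S : Finset (Fin 2 × Fin (2 * m)))
    (hcard : S.card = 2 * m) (hS : Nonatt S) (k : ℕ) (hk : k < m) :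
    (S.filter (fun p => (p.2 : ℕ) = 2 * k ∨ (p.2 : ℕ) = 2 * k + 1)).card = 2 := by
  classical
  -- fiberwise decomposition by block index
  have hfib : S.card = ∑ j ∈ Finset.range m,
      (S.filter (fun p => (p.2 : ℕ) / 2 = j)).card := by
    apply Finset.card_eq_sum_card_fiberwise
    intro p _
    have := p.2.isLt
    simp only [Finset.mem_coe, Finset.mem_range]
    omega
  -- each block has at most 2 pawns, via parity injection
  have hle : ∀ j ∈ Finset.range m,
      (S.filter (fun p => (p.2 : ℕ) / 2 = j)).card ≤ 2 := by
    intro j _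
    have h2 : (S.filter (fun p => (p.2 : ℕ) / 2 = j)).card ≤ (Finset.range 2).card := by
      apply Finset.card_le_card_of_injOn (fun p => ((p.1 : ℕ) + (p.2 : ℕ)) % 2)
      · intro p _
        simp only [Finset.mem_coe, Finset.mem_range]
        omega
      · intro p hp q hq hpar
        by_contra hne
        simp only [Finset.mem_coe, Finset.mem_filter] at hp hq
        apply hS p hp.1 q hq.1 hne
        have hne' : ¬((p.1 : ℕ) = (q.1 : ℕ) ∧ (p.2 : ℕ) = (q.2 : ℕ)) := by
          rintro ⟨h1, h2⟩
          exact hne (Prod.ext (Fin.ext h1) (Fin.ext h2))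
        have hp1 := p.1.isLt
        have hq1 := q.1.isLt
        have hcp := hp.2
        have hcq := hq.2
        simp only at hpar
        constructor <;>
          rw [abs_eq (by norm_num : (0:ℤ) ≤ 1)] <;> omega
    simpa using h2
  -- the stated filter equals the block-index filter
  have hfe : S.filter (fun p => (p.2 : ℕ) = 2 * k ∨ (p.2 : ℕ) = 2 * k + 1)
      = S.filter (fun p => (p.2 : ℕ) / 2 = k) := by
    apply Finset.filter_congr
    intro p _
    constructor <;> intro h <;> omega
  rw [hfe]
  -- sum argument: each ≤ 2, total = 2m over m blocks ⇒ each = 2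
  by_contra hne2
  have hlt : (S.filter (fun p => (p.2 : ℕ) / 2 = k)).card < 2 :=
    lt_of_le_of_ne (hle k (Finset.mem_range.mpr hk)) hne2
  have hsumlt : ∑ j ∈ Finset.range m,
      (S.filter (fun p => (p.2 : ℕ) / 2 = j)).card < ∑ _j ∈ Finset.range m, 2 := by
    apply Finset.sum_lt_sum hle
    exact ⟨k, Finset.mem_range.mpr hk, hlt⟩
  simp only [Finset.sum_const, Finset.card_range, smul_eq_mul] at hsumlt
  omega
end

section
/- If S is a nonattacking arrangement of 2mn pawns on a 2n×2m board, then each horizontal strip of two consecutive rows (rows 2i, 2i+1) contains exactly 2m pawns of S. -/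
theorem stmt11 (m n : ℕ) (hm : 1 ≤ m) (hn : 1 ≤ n)
    (S : Finset (Fin (2 * n) × Fin (2 * m)))
    (hcard : S.card = 2 * m * n) (hS : Nonatt S) (i : ℕ) (hi : i < n) :
    (S.filter (fun p => (p.1 : ℕ) = 2 * i ∨ (p.1 : ℕ) = 2 * i + 1)).card = 2 * m := by
  classical
  -- each 2×2 block contains at most 2 pawns
  have hblock : ∀ k j : ℕ,
      (S.filter (fun p => (p.1 : ℕ) / 2 = k ∧ (p.2 : ℕ) / 2 = j)).card ≤ 2 := by
    intro k j
    have h2 : (S.filter (fun p => (p.1 : ℕ) / 2 = k ∧ (p.2 : ℕ) / 2 = j)).card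
        ≤ (Finset.range 2).card := by
      apply Finset.card_le_card_of_injOn (fun p => ((p.1 : ℕ) + (p.2 : ℕ)) % 2)
      · intro p _
        simp [Nat.mod_lt]; omega
      · intro p hp q hq hpq
        simp only [Finset.coe_filter, Set.mem_setOf_eq] at hp hq
        obtain ⟨hpS, hp1, hp2⟩ := hp
        obtain ⟨hqS, hq1, hq2⟩ := hq
        by_contra hne
        apply hS p hpS q hqS hne
        have hne' : (p.1 : ℕ) ≠ (q.1 : ℕ) ∨ (p.2 : ℕ) ≠ (q.2 : ℕ) := by
          by_contra h
          push_neg at h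
          exact hne (Prod.ext (Fin.ext h.1) (Fin.ext h.2))
        have hpq' : ((p.1 : ℕ) + (p.2 : ℕ)) % 2 = ((q.1 : ℕ) + (q.2 : ℕ)) % 2 := hpq
        have key : ((p.1 : ℕ) + 1 = (q.1 : ℕ) ∨ (q.1 : ℕ) + 1 = (p.1 : ℕ)) ∧
            ((p.2 : ℕ) + 1 = (q.2 : ℕ) ∨ (q.2 : ℕ) + 1 = (p.2 : ℕ)) := by omega
        refine ⟨?_, ?_⟩ <;> rw [abs_eq (by norm_num : (0:ℤ) ≤ 1)] <;> omega
    simpa using h2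
  -- each strip contains at most 2m pawns
  have hstrip : ∀ k : ℕ,
      (S.filter (fun p => (p.1 : ℕ) / 2 = k)).card ≤ 2 * m := by
    intro k
    have := Finset.card_eq_sum_card_fiberwise
      (f := fun p : Fin (2*n) × Fin (2*m) => (p.2 : ℕ) / 2)
      (s := S.filter (fun p => (p.1 : ℕ) / 2 = k)) (t := Finset.range m)
      (by
        intro p _
        simp only [Finset.mem_coe, Finset.mem_range]
        have := p.2.isLt
        omega)
    rw [this]
    calc ∑ j ∈ Finset.range m,
          ((S.filter (fun p => (p.1 : ℕ) / 2 = k)).filter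
            (fun p => (p.2 : ℕ) / 2 = j)).card
        ≤ ∑ j ∈ Finset.range m, 2 := by
          apply Finset.sum_le_sum
          intro j _
          rw [Finset.filter_filter]
          exact hblock k j
      _ = 2 * m := by
          rw [Finset.sum_const, Finset.card_range, smul_eq_mul]
          ring
  -- strips partition S
  have hsum : ∑ k ∈ Finset.range n,
      (S.filter (fun p => (p.1 : ℕ) / 2 = k)).card = S.card := by
    symm
    apply Finset.card_eq_sum_card_fiberwise
      (f := fun p : Fin (2*n) × Fin (2*m) => (p.1 : ℕ) / 2)
    intro p _
    simp only [Finset.mem_coe, Finset.mem_range]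
    have := p.1.isLt
    omega
  have htot : ∑ k ∈ Finset.range n,
      (S.filter (fun p => (p.1 : ℕ) / 2 = k)).card
      = ∑ k ∈ Finset.range n, 2 * m := by
    rw [hsum, hcard, Finset.sum_const, Finset.card_range, smul_eq_mul]
    ring
  have heq := (Finset.sum_eq_sum_iff_of_le
    (fun k _ => hstrip k)).mp htot i (Finset.mem_range.mpr hi)
  have hfilter : S.filter (fun p => (p.1 : ℕ) = 2 * i ∨ (p.1 : ℕ) = 2 * i + 1)
      = S.filter (fun p => (p.1 : ℕ) / 2 = i) := by
    apply Finset.filter_congr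
    intro p _
    constructor
    · intro h; omega
    · intro h; omega
  rw [hfilter, heq]
end

section
/- For the 4×4 board, the number of 8-element sets of cells with no two cells diagonally adjacent is exactly 36 (= binomial(4,2)²). -/
set_option maxRecDepth 40000

abbrev Cell := Fin 4 × Fin 4

def evP (p : Cell) : Prop := (p.1.val + p.2.val) % 2 = 0

instance : DecidablePred evP := fun p => by unfold evP; infer_instance

lemma adj_parity {p q : Cell} (h : PawnAdj p q) : (evP p ↔ evP q) := by
  obtain ⟨h1, h2⟩ := h
  rw [abs_eq (by norm_num : (0:ℤ) ≤ 1)] at h1 h2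
  unfold evP
  constructor <;> intro hh <;> omega

lemma nonatt_mono {S T : Finset Cell} (h : Nonatt T) (hs : S ⊆ T) : Nonatt S :=
  fun p hp q hq => h p (hs hp) q (hs hq)

def E : Finset Cell := Finset.univ.filter evP
def O : Finset Cell := Finset.univ.filter (fun p => ¬ evP p)

def P : Finset (Finset Cell × Finset Cell) :=
  (E.powerset ×ˢ O.powerset).filter
    (fun q => q.1.card + q.2.card = 8 ∧ Nonatt q.1 ∧ Nonatt q.2)

lemma big_card :
    ((Finset.univ : Finset Cell).powerset.filter
        (fun S => S.card = 8 ∧ Nonatt S)).card = P.card := by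
  refine Finset.card_bij' (fun S _ => (S.filter evP, S.filter (fun p => ¬ evP p)))
    (fun q _ => q.1 ∪ q.2) ?_ ?_ ?_ ?_
  · intro S hS
    simp only [Finset.mem_filter, Finset.mem_powerset] at hS
    obtain ⟨-, hcard, hna⟩ := hS
    simp only [P, Finset.mem_filter, Finset.mem_product, Finset.mem_powerset]
    refine ⟨⟨Finset.filter_subset_filter _ (Finset.subset_univ S),
           Finset.filter_subset_filter _ (Finset.subset_univ S)⟩, ?_, ?_, ?_⟩
    · rw [Finset.card_filter_add_card_filter_not]; exact hcard
    · exact nonatt_mono hna (Finset.filter_subset _ _)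
    · exact nonatt_mono hna (Finset.filter_subset _ _)
  · intro q hq
    simp only [P, Finset.mem_filter, Finset.mem_product, Finset.mem_powerset] at hq
    obtain ⟨⟨hA, hB⟩, hcard, hna1, hna2⟩ := hq
    simp only [Finset.mem_filter, Finset.mem_powerset]
    have hdisj : Disjoint q.1 q.2 := by
      refine Finset.disjoint_left.mpr (fun a ha hb => ?_)
      have h1 := hA ha; have h2 := hB hb
      simp only [E, O, Finset.mem_filter] at h1 h2
      exact h2.2 h1.2
    refine ⟨Finset.subset_univ _, by rw [Finset.card_union_of_disjoint hdisj]; exact hcard, ?_⟩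
    intro p hp r hr hne hadj
    have hev : ∀ x ∈ q.1, evP x := fun x hx => (Finset.mem_filter.mp (hA hx)).2
    have hod : ∀ x ∈ q.2, ¬ evP x := fun x hx => (Finset.mem_filter.mp (hB hx)).2
    rcases Finset.mem_union.mp hp with hp1 | hp2 <;>
      rcases Finset.mem_union.mp hr with hr1 | hr2
    · exact hna1 p hp1 r hr1 hne hadj
    · exact hod r hr2 ((adj_parity hadj).mp (hev p hp1))
    · exact hod p hp2 ((adj_parity hadj).mpr (hev r hr1))
    · exact hna2 p hp2 r hr2 hne hadj
  · intro S _
    exact Finset.filter_union_filter_not_eq _ S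
  · intro q hq
    simp only [P, Finset.mem_filter, Finset.mem_product, Finset.mem_powerset] at hq
    obtain ⟨⟨hA, hB⟩, -, -, -⟩ := hq
    have hev : ∀ x ∈ q.1, evP x := fun x hx => (Finset.mem_filter.mp (hA hx)).2
    have hod : ∀ x ∈ q.2, ¬ evP x := fun x hx => (Finset.mem_filter.mp (hB hx)).2
    ext1
    · simp only [Finset.filter_union]
      rw [Finset.filter_true_of_mem hev, Finset.filter_false_of_mem (fun x hx => by simp [hod x hx]),
        Finset.union_empty]
    · simp only [Finset.filter_union]
      rw [Finset.filter_false_of_mem (fun x hx => by simp [hev x hx]),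
        Finset.filter_true_of_mem hod, Finset.empty_union]

def nE (k : ℕ) : ℕ := (E.powerset.filter (fun A => A.card = k ∧ Nonatt A)).card
def nO (k : ℕ) : ℕ := (O.powerset.filter (fun B => B.card = k ∧ Nonatt B)).card

lemma P_card_sum : P.card = ∑ k ∈ Finset.range 9, nE k * nO (8 - k) := by
  rw [Finset.card_eq_sum_card_fiberwise (f := fun q => q.1.card) (t := Finset.range 9)]
  · apply Finset.sum_congr rfl
    intro k hk
    have hk9 : k ≤ 8 := by simpa using Nat.lt_succ_iff.mp (Finset.mem_range.mp hk)
    have : P.filter (fun q => q.1.card = k) =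
        (E.powerset.filter (fun A => A.card = k ∧ Nonatt A)) ×ˢ
        (O.powerset.filter (fun B => B.card = 8 - k ∧ Nonatt B)) := by
      ext q
      simp only [P, Finset.mem_filter, Finset.mem_product, Finset.mem_powerset]
      constructor
      · rintro ⟨⟨⟨h1, h2⟩, hsum, hn1, hn2⟩, hck⟩
        exact ⟨⟨h1, hck, hn1⟩, ⟨h2, by omega, hn2⟩⟩
      · rintro ⟨⟨h1, hck, hn1⟩, ⟨h2, hcb, hn2⟩⟩
        exact ⟨⟨⟨h1, h2⟩, by omega, hn1, hn2⟩, hck⟩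
    rw [this, Finset.card_product]
    rfl
  · intro q hq
    simp only [P, Finset.mem_coe, Finset.mem_filter, Finset.mem_product, Finset.mem_powerset] at hq
    simp only [Finset.mem_coe, Finset.mem_range]
    omega

theorem stmt15 :
    ((Finset.univ : Finset (Fin 4 × Fin 4)).powerset.filter
        (fun S => S.card = 8 ∧ Nonatt S)).card = 36 := by
  have := big_card
  rw [show ((Finset.univ : Finset (Fin 4 × Fin 4)).powerset.filter
        (fun S => S.card = 8 ∧ Nonatt S)) = ((Finset.univ : Finset Cell).powerset.filter
        (fun S => S.card = 8 ∧ Nonatt S)) from rfl, this, P_card_sum]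
  decide
end
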